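/- arXiv:1201.6538 — 5 statements merged into one kernel-verified Lean document; each statement's English description precedes it below -/
import Mathlib

section
/- For every nonnegative integer i and any complex parameter β, the monomial z^i/i! can be expanded as z^i/i! = (-1)^i · Σ_{j=0}^{i} C(-β, i-j) · L_j^{(β-j)}(z), where L_j^{(α)} denotes the generalized Laguerre polynomial and C(x,k) is the generalized binomial coefficient. -/
open Finset

/-- Generalized binomial coefficient C(x, k) = x(x-1)⋯(x-k+1)/k!. -/
noncomputable def gbinom (x : ℂ) (k : ℕ) : ℂ :=
  (∏ j ∈ Finset.range k, (x - j)) / (k.factorial : ℂ)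

/-- Generalized Laguerre polynomial L_i^{(α)}(z) = Σ_{j=0}^i (-1)^j C(i+α, i-j) z^j / j!. -/
noncomputable def lag (i : ℕ) (α z : ℂ) : ℂ :=
  ∑ j ∈ Finset.range (i + 1), (-1 : ℂ) ^ j * gbinom ((i : ℂ) + α) (i - j) * z ^ j / (j.factorial : ℂ)

lemma descPoch_smeval_eq_prod (x : ℂ) (k : ℕ) :
    (descPochhammer ℤ k).smeval x = ∏ j ∈ Finset.range k, (x - j) := by
  induction k with
  | zero => simp [descPochhammer_zero, Polynomial.smeval_one]
  | succ k ih =>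
    rw [descPochhammer_succ_right, Polynomial.smeval_mul, ih, Finset.prod_range_succ,
      Polynomial.smeval_sub, Polynomial.smeval_X, Polynomial.smeval_natCast]
    simp

lemma gbinom_eq_choose (x : ℂ) (k : ℕ) : gbinom x k = Ring.choose x k := by
  have h := Ring.descPochhammer_eq_factorial_smul_choose x k
  rw [descPoch_smeval_eq_prod] at h
  rw [gbinom, h, nsmul_eq_mul,
    mul_div_cancel_left₀ _ (Nat.cast_ne_zero.mpr k.factorial_ne_zero)]

lemma sum_gbinom_neg (x : ℂ) (n : ℕ) :
    ∑ m ∈ Finset.range (n + 1), gbinom x m * gbinom (-x) (n - m) =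
      if n = 0 then 1 else 0 := by
  have h := Ring.add_choose_eq (r := x) (s := -x) n (Commute.all x (-x))
  rw [add_neg_cancel, Finset.Nat.sum_antidiagonal_eq_sum_range_succ_mk] at h
  have h0 : Ring.choose (0 : ℂ) n = if n = 0 then 1 else 0 := by
    have := Ring.choose_natCast (R := ℂ) 0 n
    rw [Nat.cast_zero] at this
    rw [this]
    cases n with
    | zero => simp
    | succ n => simp [Nat.choose_eq_zero_of_lt (Nat.succ_pos n)]
  rw [h0] at h
  rw [h]
  exact Finset.sum_congr rfl fun m _ => by simp [gbinom_eq_choose]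

theorem monomial_as_laguerre_sum (i : ℕ) (β : ℂ) (z : ℂ) :
    z ^ i / (i.factorial : ℂ) =
      (-1 : ℂ) ^ i * ∑ j ∈ Finset.range (i + 1), gbinom (-β) (i - j) * lag j (β - j) z := by
  have hlag : ∀ j : ℕ, lag j (β - j) z =
      ∑ k ∈ Finset.range (j + 1), (-1 : ℂ) ^ k * gbinom β (j - k) * z ^ k / (k.factorial : ℂ) := by
    intro j
    simp [lag, add_sub_cancel]
  have step1 : ∑ j ∈ Finset.range (i + 1), gbinom (-β) (i - j) * lag j (β - j) z =
      ∑ j ∈ Finset.Ico 0 (i + 1), ∑ k ∈ Finset.Ico 0 (j + 1),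
        gbinom (-β) (i - j) * ((-1 : ℂ) ^ k * gbinom β (j - k) * z ^ k / (k.factorial : ℂ)) := by
    rw [Finset.range_eq_Ico]
    refine Finset.sum_congr rfl fun j _ => ?_
    rw [hlag j, Finset.mul_sum, Finset.range_eq_Ico]
  rw [step1, ← Finset.sum_Ico_Ico_comm]
  have step2 : ∀ k ∈ Finset.Ico 0 (i + 1),
      ∑ j ∈ Finset.Ico k (i + 1),
        gbinom (-β) (i - j) * ((-1 : ℂ) ^ k * gbinom β (j - k) * z ^ k / (k.factorial : ℂ)) =
      (if i - k = 0 then 1 else 0) * ((-1 : ℂ) ^ k * z ^ k / (k.factorial : ℂ)) := by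
    intro k hk
    have hki : k ≤ i := Nat.lt_succ_iff.mp (Finset.mem_Ico.mp hk).2
    have : ∑ j ∈ Finset.Ico k (i + 1),
        gbinom (-β) (i - j) * ((-1 : ℂ) ^ k * gbinom β (j - k) * z ^ k / (k.factorial : ℂ)) =
        (∑ j ∈ Finset.Ico k (i + 1), gbinom β (j - k) * gbinom (-β) (i - j)) *
          ((-1 : ℂ) ^ k * z ^ k / (k.factorial : ℂ)) := by
      rw [Finset.sum_mul]
      refine Finset.sum_congr rfl fun j _ => ?_
      ring
    rw [this]
    congr 1
    rw [Finset.sum_Ico_eq_sum_range]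
    have hrw : i + 1 - k = (i - k) + 1 := by omega
    rw [hrw]
    rw [← sum_gbinom_neg β (i - k)]
    refine Finset.sum_congr rfl fun m hm => ?_
    congr 2
    · omega
    · omega
  rw [Finset.sum_congr rfl step2]
  have hsum : ∑ k ∈ Finset.Ico 0 (i + 1),
      (if i - k = 0 then 1 else 0 : ℂ) * ((-1 : ℂ) ^ k * z ^ k / (k.factorial : ℂ)) =
      (-1 : ℂ) ^ i * z ^ i / (i.factorial : ℂ) := by
    rw [← Finset.range_eq_Ico]
    rw [Finset.sum_eq_single i]
    · simp
    · intro b hb hbi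
      have : i - b ≠ 0 := by
        have := Nat.lt_succ_iff.mp (Finset.mem_range.mp hb)
        omega
      simp [this]
    · intro h
      exact absurd (Finset.self_mem_range_succ i) h
  rw [hsum]
  rw [← mul_div_assoc, ← mul_assoc, ← mul_pow]
  simp
end

section
/- The generalized Laguerre polynomials satisfy the recursion L_j^{(β-j)}(z) = -(1 + (z-β-1)/j) · L_{j-1}^{(β-j+1)}(z) - (z/j) · L_{j-2}^{(β-j+2)}(z) for all integers j ≥ 2. -/
open Finset

lemma gbinom_succ (x : ℂ) (k : ℕ) :
    ((k : ℂ) + 1) * gbinom x (k + 1) = (x - k) * gbinom x k := by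
  have hk : (k.factorial : ℂ) ≠ 0 := Nat.cast_ne_zero.2 k.factorial_ne_zero
  have h1 : (k : ℂ) + 1 ≠ 0 := Nat.cast_add_one_ne_zero k
  simp only [gbinom, Finset.prod_range_succ, Nat.factorial_succ]
  push_cast
  field_simp

lemma lag_shift (i : ℕ) (β z : ℂ) :
    lag i (β - i) z
      = ∑ k ∈ Finset.range (i + 1),
          (-1 : ℂ) ^ k * gbinom β (i - k) * z ^ k / (k.factorial : ℂ) := by
  unfold lag
  refine Finset.sum_congr rfl fun k _ => ?_
  have : (i : ℂ) + (β - i) = β := by ring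
  rw [this]

/-- The key multiplied-out recursion. -/
lemma key (n : ℕ) (β z : ℂ) :
    ((n : ℂ) + 2) *
        (∑ k ∈ Finset.range (n + 3),
          (-1 : ℂ) ^ k * gbinom β (n + 2 - k) * z ^ k / (k.factorial : ℂ))
      = (β - n - 1 - z) *
          (∑ k ∈ Finset.range (n + 2),
            (-1 : ℂ) ^ k * gbinom β (n + 1 - k) * z ^ k / (k.factorial : ℂ))
        - z * (∑ k ∈ Finset.range (n + 1),
            (-1 : ℂ) ^ k * gbinom β (n - k) * z ^ k / (k.factorial : ℂ)) := by
  set A : ℕ → ℂ := fun k => (-1 : ℂ) ^ k * gbinom β (n + 2 - k) * z ^ k / (k.factorial : ℂ) with hA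
  set B : ℕ → ℂ := fun k => (-1 : ℂ) ^ k * gbinom β (n + 1 - k) * z ^ k / (k.factorial : ℂ) with hB
  set C : ℕ → ℂ := fun k => (-1 : ℂ) ^ k * gbinom β (n - k) * z ^ k / (k.factorial : ℂ) with hC
  -- (ii): (k+1) * A (k+1) = -z * B k
  have hAB : ∀ k : ℕ, ((k : ℂ) + 1) * A (k + 1) = -z * B k := by
    intro k
    have hsub : n + 2 - (k + 1) = n + 1 - k := by omega
    have hfac : ((k + 1).factorial : ℂ) = ((k : ℂ) + 1) * (k.factorial : ℂ) := by
      rw [Nat.factorial_succ]; push_cast; ring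
    have h1 : (k : ℂ) + 1 ≠ 0 := Nat.cast_add_one_ne_zero k
    have hk : (k.factorial : ℂ) ≠ 0 := Nat.cast_ne_zero.2 k.factorial_ne_zero
    simp only [hA, hB, hsub, hfac, pow_succ]
    field_simp
  -- (iii): (k+1) * B (k+1) = -z * C k
  have hBC : ∀ k : ℕ, ((k : ℂ) + 1) * B (k + 1) = -z * C k := by
    intro k
    have hsub : n + 1 - (k + 1) = n - k := by omega
    have hfac : ((k + 1).factorial : ℂ) = ((k : ℂ) + 1) * (k.factorial : ℂ) := by
      rw [Nat.factorial_succ]; push_cast; ring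
    have h1 : (k : ℂ) + 1 ≠ 0 := Nat.cast_add_one_ne_zero k
    have hk : (k.factorial : ℂ) ≠ 0 := Nat.cast_ne_zero.2 k.factorial_ne_zero
    simp only [hB, hC, hsub, hfac, pow_succ]
    field_simp
  -- (i): for k ≤ n+1, (n+2) * A k = (β-n-1) * B k + k * A k + k * B k
  have hi : ∀ k ∈ Finset.range (n + 2),
      ((n : ℂ) + 2) * A k = (β - (n : ℂ) - 1) * B k + (k : ℂ) * A k + (k : ℂ) * B k := by
    intro k hk
    have hk' : k ≤ n + 1 := by simpa [Nat.lt_succ_iff] using hk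
    have hA2 : n + 2 - k = (n + 1 - k) + 1 := by omega
    have hmc : ((n + 1 - k : ℕ) : ℂ) = (n : ℂ) + 1 - (k : ℂ) := by
      have : ((n + 1 - k) + k : ℕ) = n + 1 := by omega
      have h := congrArg (fun t : ℕ => (t : ℂ)) this
      push_cast at h
      linear_combination h
    have hrec := gbinom_succ β (n + 1 - k)
    simp only [hA, hB, hA2]
    have hfk : (k.factorial : ℂ) ≠ 0 := Nat.cast_ne_zero.2 k.factorial_ne_zero
    linear_combination ((-1 : ℂ) ^ k * z ^ k / (k.factorial : ℂ)) * hrec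
      - ((-1 : ℂ) ^ k * z ^ k / (k.factorial : ℂ) * (gbinom β ((n + 1 - k) + 1) + gbinom β (n + 1 - k))) * hmc
  -- Sum manipulations
  have hzS1 : ∑ k ∈ Finset.range (n + 2), (k : ℂ) * A k + ((n : ℂ) + 2) * A (n + 2)
      = -z * ∑ k ∈ Finset.range (n + 2), B k := by
    have e1 : ∑ k ∈ Finset.range (n + 3), (k : ℂ) * A k
        = (∑ k ∈ Finset.range (n + 2), ((k : ℂ) + 1) * A (k + 1)) + (0 : ℂ) * A 0 := by
      rw [Finset.sum_range_succ']
      push_cast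
      rfl
    have e2 : ∑ k ∈ Finset.range (n + 3), (k : ℂ) * A k
        = ∑ k ∈ Finset.range (n + 2), (k : ℂ) * A k + ((n + 2 : ℕ) : ℂ) * A (n + 2) :=
      Finset.sum_range_succ _ _
    rw [Finset.mul_sum]
    push_cast at e2
    rw [← e2, e1]
    simp only [zero_mul, add_zero]
    exact Finset.sum_congr rfl fun k _ => hAB k
  have hzS0 : ∑ k ∈ Finset.range (n + 2), (k : ℂ) * B k
      = -z * ∑ k ∈ Finset.range (n + 1), C k := by
    rw [Finset.mul_sum, Finset.sum_range_succ']
    simp only [Nat.cast_zero, zero_mul, add_zero]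
    push_cast
    exact Finset.sum_congr rfl fun k _ => hBC k
  calc ((n : ℂ) + 2) * ∑ k ∈ Finset.range (n + 3), A k
      = ∑ k ∈ Finset.range (n + 2), ((n : ℂ) + 2) * A k + ((n : ℂ) + 2) * A (n + 2) := by
        rw [← Finset.mul_sum, ← mul_add, Finset.sum_range_succ]
    _ = ∑ k ∈ Finset.range (n + 2),
          ((β - (n : ℂ) - 1) * B k + (k : ℂ) * A k + (k : ℂ) * B k) + ((n : ℂ) + 2) * A (n + 2) := by
        rw [Finset.sum_congr rfl hi]
    _ = (β - (n : ℂ) - 1) * ∑ k ∈ Finset.range (n + 2), B k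
          + (∑ k ∈ Finset.range (n + 2), (k : ℂ) * A k + ((n : ℂ) + 2) * A (n + 2))
          + ∑ k ∈ Finset.range (n + 2), (k : ℂ) * B k := by
        rw [Finset.sum_add_distrib, Finset.sum_add_distrib, ← Finset.mul_sum]
        ring
    _ = (β - (n : ℂ) - 1) * ∑ k ∈ Finset.range (n + 2), B k
          + (-z * ∑ k ∈ Finset.range (n + 2), B k)
          + (-z * ∑ k ∈ Finset.range (n + 1), C k) := by rw [hzS1, hzS0]
    _ = (β - (n : ℂ) - 1 - z) * ∑ k ∈ Finset.range (n + 2), B k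
          - z * ∑ k ∈ Finset.range (n + 1), C k := by ring

theorem laguerre_shifted_recursion (j : ℕ) (hj : 2 ≤ j) (β z : ℂ) :
    lag j (β - j) z =
      -(1 + (z - β - 1) / j) * lag (j - 1) (β - (j - 1)) z - (z / j) * lag (j - 2) (β - (j - 2)) z := by
  obtain ⟨n, rfl⟩ : ∃ n, j = n + 2 := ⟨j - 2, by omega⟩
  have h1 : n + 2 - 1 = n + 1 := by omega
  have h2 : n + 2 - 2 = n := by omega
  have c1 : β - (((n + 2 : ℕ) : ℂ) - 1) = β - ((n + 1 : ℕ) : ℂ) := by push_cast; ring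
  have c2 : β - (((n + 2 : ℕ) : ℂ) - 2) = β - ((n : ℕ) : ℂ) := by push_cast; ring
  rw [h1, h2, c1, c2, lag_shift, lag_shift, lag_shift]
  have hn2 : ((n : ℂ) + 2) ≠ 0 := by
    have h : ((n + 2 : ℕ) : ℂ) ≠ 0 := Nat.cast_ne_zero.2 (by omega)
    push_cast at h
    exact h
  have hk := key n β z
  have hcast : ((n + 2 : ℕ) : ℂ) = (n : ℂ) + 2 := by push_cast; ring
  rw [hcast, show n + 2 + 1 = n + 3 from rfl, show n + 1 + 1 = n + 2 from rfl]
  field_simp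
  linear_combination hk
end

section
/- For real α > -1 and nonnegative integers i, j, the orthogonality relation ∫_0^∞ z^α e^{-z} L_i^{(α)}(z) L_j^{(α)}(z) dz equals 0 if i ≠ j, and equals C(i+α, i) · Γ(α+1) if i = j. -/
open Finset MeasureTheory

/-- Generalized binomial coefficient C(x, k) = x(x-1)⋯(x-k+1)/k! (real version). -/
noncomputable def gbinomR (x : ℝ) (k : ℕ) : ℝ :=
  (∏ j ∈ Finset.range k, (x - j)) / (k.factorial : ℝ)

/-- Generalized Laguerre polynomial, real version. -/
noncomputable def lagR (i : ℕ) (α z : ℝ) : ℝ :=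
  ∑ j ∈ Finset.range (i + 1), (-1 : ℝ) ^ j * gbinomR ((i : ℝ) + α) (i - j) * z ^ j / (j.factorial : ℝ)

noncomputable def gfun (x : ℝ) (k l : ℕ) : ℝ := ∏ m ∈ Finset.range k, (x + l + m + 1)

lemma gfun_delta (x : ℝ) (k l : ℕ) :
    gfun x (k+1) (l+1) - gfun x (k+1) l = (k+1) * gfun (x+1) k l := by
  have h1 : gfun x (k+1) (l+1) = (∏ m ∈ range k, (x + l + m + 2)) * (x + l + k + 2) := by
    rw [gfun, Finset.prod_range_succ]
    push_cast
    rw [Finset.prod_congr rfl (g := fun m : ℕ => x + l + m + 2) (fun m _ => by push_cast; ring)]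
    ring
  have h2 : gfun x (k+1) l = (∏ m ∈ range k, (x + l + m + 2)) * (x + l + 1) := by
    rw [gfun, Finset.prod_range_succ']
    push_cast
    rw [Finset.prod_congr rfl (g := fun m : ℕ => x + l + m + 2) (fun m _ => by push_cast; ring)]
    ring
  have h3 : gfun (x+1) k l = ∏ m ∈ range k, (x + l + m + 2) := by
    rw [gfun]; exact Finset.prod_congr rfl (fun m _ => by ring)
  rw [h1, h2, h3]; ring

lemma altsum_succ (j : ℕ) (f : ℕ → ℝ) :
    ∑ l ∈ range (j+2), (-1:ℝ)^l * ((j+1).choose l) * f l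
      = -∑ l ∈ range (j+1), (-1:ℝ)^l * (j.choose l) * (f (l+1) - f l) := by
  rw [Finset.sum_range_succ' (fun l => (-1:ℝ)^l * ((j+1).choose l) * f l) (j+1)]
  have hsplit : ∑ l ∈ range (j+1), (-1:ℝ)^(l+1) * ((j+1).choose (l+1)) * f (l+1)
      = -(∑ l ∈ range (j+1), (-1:ℝ)^l * (j.choose l) * f (l+1))
        - ∑ l ∈ range (j+1), (-1:ℝ)^l * (j.choose (l+1)) * f (l+1) := by
    rw [← Finset.sum_neg_distrib, ← Finset.sum_sub_distrib]
    exact Finset.sum_congr rfl fun l _ => by rw [Nat.choose_succ_succ]; push_cast; ring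
  have hB : ∑ l ∈ range (j+1), (-1:ℝ)^l * (j.choose (l+1)) * f (l+1)
      = ∑ l ∈ range j, (-1:ℝ)^l * (j.choose (l+1)) * f (l+1) := by
    rw [Finset.sum_range_succ, Nat.choose_succ_self]; simp
  have hR : ∑ l ∈ range (j+1), (-1:ℝ)^l * (j.choose l) * (f (l+1) - f l)
      = (∑ l ∈ range (j+1), (-1:ℝ)^l * (j.choose l) * f (l+1))
        - ∑ l ∈ range (j+1), (-1:ℝ)^l * (j.choose l) * f l := by
    rw [← Finset.sum_sub_distrib]
    exact Finset.sum_congr rfl fun l _ => by ring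
  have hF : ∑ l ∈ range (j+1), (-1:ℝ)^l * (j.choose l) * f l
      = f 0 - ∑ l ∈ range j, (-1:ℝ)^l * (j.choose (l+1)) * f (l+1) := by
    rw [Finset.sum_range_succ' (fun l => (-1:ℝ)^l * (j.choose l) * f l) j]
    have h : ∑ l ∈ range j, (-1:ℝ)^(l+1) * (j.choose (l+1)) * f (l+1)
        = -∑ l ∈ range j, (-1:ℝ)^l * (j.choose (l+1)) * f (l+1) := by
      rw [← Finset.sum_neg_distrib]; exact Finset.sum_congr rfl fun l _ => by ring
    rw [h]; simp; ring
  rw [hsplit, hB, hR, hF]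
  simp
  ring

lemma FD (j : ℕ) : ∀ k (x : ℝ), k ≤ j →
    ∑ l ∈ range (j+1), (-1:ℝ)^l * (j.choose l) * gfun x k l
      = if k = j then (-1:ℝ)^j * j.factorial else 0 := by
  induction j with
  | zero =>
      intro k x hk
      interval_cases k
      simp [gfun]
  | succ j ih =>
      intro k x hk
      rw [show j + 1 + 1 = j + 2 from rfl, altsum_succ j (fun l => gfun x k l)]
      match k with
      | 0 =>
          have h0 : ∀ l ∈ range (j+1), (-1:ℝ)^l * (j.choose l) * (gfun x 0 (l+1) - gfun x 0 l) = 0 := by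
            intro l _; simp [gfun]
          rw [Finset.sum_eq_zero h0]
          simp [Nat.succ_ne_zero]
      | k'+1 =>
          have hd : ∀ l ∈ range (j+1), (-1:ℝ)^l * (j.choose l) * (gfun x (k'+1) (l+1) - gfun x (k'+1) l)
              = (k'+1) * ((-1:ℝ)^l * (j.choose l) * gfun (x+1) k' l) := by
            intro l _; rw [gfun_delta]; ring
          rw [Finset.sum_congr rfl hd, ← Finset.mul_sum, ih k' (x+1) (by omega)]
          by_cases h : k' = j
          · subst h
            simp [Nat.factorial_succ]
            ring
          · have h2 : ¬ (k' + 1 = j + 1) := by omega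
            simp [h, h2]

lemma Gamma_add_nat (x : ℝ) (hx : 0 < x) (n : ℕ) :
    Real.Gamma (x + n) = Real.Gamma x * ∏ m ∈ range n, (x + m) := by
  induction n with
  | zero => simp
  | succ n ih =>
      have h0 : (0:ℝ) < x + n := by positivity
      have h1 : x + ((n+1 : ℕ) : ℝ) = (x + n) + 1 := by push_cast; ring
      rw [h1, Real.Gamma_add_one (ne_of_gt h0), ih, Finset.prod_range_succ]
      ring

lemma prod_reflect (α : ℝ) (j l : ℕ) (hl : l ≤ j) :
    ∏ m ∈ range (j - l), ((j:ℝ) + α - m) = ∏ m ∈ range (j - l), (α + l + 1 + m) := by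
  rw [← Finset.prod_range_reflect (fun m => α + (l:ℝ) + 1 + m) (j - l)]
  apply Finset.prod_congr rfl
  intro m hm
  rw [Finset.mem_range] at hm
  have e : j - l - 1 - m = j - (l + 1 + m) := by omega
  simp only [e]
  rw [Nat.cast_sub (by omega : l + 1 + m ≤ j)]
  push_cast; ring

lemma gamma_combine (α : ℝ) (hα : -1 < α) (j l : ℕ) (hl : l ≤ j) :
    (∏ m ∈ range (j - l), ((j:ℝ) + α - m)) * Real.Gamma (α + l + 1) = Real.Gamma (α + j + 1) := by
  have hx : (0:ℝ) < α + l + 1 := by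
    have := Nat.cast_nonneg (α := ℝ) l; linarith
  have h := Gamma_add_nat (α + l + 1) hx (j - l)
  rw [Nat.cast_sub hl, show (α + ↑l + 1) + ((j:ℝ) - ↑l) = α + ↑j + 1 from by ring] at h
  rw [prod_reflect α j l hl, h]; ring

lemma choose_fact (j l : ℕ) (hl : l ≤ j) :
    (1:ℝ) / (((j-l).factorial : ℝ) * l.factorial) = (j.choose l : ℝ) / j.factorial := by
  have h := Nat.choose_mul_factorial_mul_factorial hl
  have h1 : ((j.choose l : ℝ)) * l.factorial * (j-l).factorial = j.factorial := by
    exact_mod_cast congrArg (Nat.cast (R := ℝ)) h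
  have n1 : ((j-l).factorial : ℝ) ≠ 0 := by positivity
  have n2 : (l.factorial : ℝ) ≠ 0 := by positivity
  have n3 : (j.factorial : ℝ) ≠ 0 := by positivity
  field_simp
  linarith [h1]

lemma term_eq (α : ℝ) (hα : -1 < α) (j k l : ℕ) (hl : l ≤ j) :
    (-1:ℝ)^l * gbinomR ((j:ℝ) + α) (j - l) / l.factorial * Real.Gamma (α + ((k+l : ℕ) : ℝ) + 1)
      = Real.Gamma (α + j + 1) / j.factorial * ((-1:ℝ)^l * (j.choose l) * gfun α k l) := by
  have hx : (0:ℝ) < α + l + 1 := by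
    have := Nat.cast_nonneg (α := ℝ) l; linarith
  have hg : Real.Gamma (α + ((k+l : ℕ) : ℝ) + 1) = Real.Gamma (α + l + 1) * gfun α k l := by
    have h := Gamma_add_nat (α + l + 1) hx k
    rw [show α + ((k+l : ℕ) : ℝ) + 1 = (α + ↑l + 1) + ((k:ℕ) : ℝ) from by push_cast; ring, h, gfun]
    congr 1
    exact Finset.prod_congr rfl fun m _ => by ring
  rw [hg, gbinomR]
  have key : (-1:ℝ)^l * ((∏ m ∈ range (j-l), ((j:ℝ) + α - ↑m)) / ((j-l).factorial : ℝ)) / l.factorial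
        * (Real.Gamma (α + l + 1) * gfun α k l)
      = ((∏ m ∈ range (j-l), ((j:ℝ) + α - ↑m)) * Real.Gamma (α + l + 1))
        * ((1:ℝ) / (((j-l).factorial : ℝ) * l.factorial)) * ((-1:ℝ)^l * gfun α k l) := by
    ring
  rw [key, gamma_combine α hα j l hl, choose_fact j l hl]
  ring

lemma lagInnerSum (α : ℝ) (hα : -1 < α) (j k : ℕ) (hk : k ≤ j) :
    ∑ l ∈ range (j+1), (-1:ℝ)^l * gbinomR ((j:ℝ)+α) (j-l) / l.factorial * Real.Gamma (α + ((k+l : ℕ) : ℝ) + 1)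
      = if k = j then (-1:ℝ)^j * Real.Gamma (α + j + 1) else 0 := by
  rw [Finset.sum_congr rfl (fun l hl => term_eq α hα j k l (by rw [Finset.mem_range] at hl; omega)),
      ← Finset.mul_sum, FD j k α hk]
  have hj : (j.factorial : ℝ) ≠ 0 := by positivity
  by_cases h : k = j
  · rw [if_pos h, if_pos h]; field_simp
  · rw [if_neg h, if_neg h, mul_zero]

lemma hpos (α : ℝ) (hα : -1 < α) (n : ℕ) : (0:ℝ) < α + n + 1 := by
  have := Nat.cast_nonneg (α := ℝ) n; linarith

lemma integrand_eq (α : ℝ) (n : ℕ) :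
    Set.EqOn (fun x : ℝ => Real.exp (-x) * x ^ (α + n + 1 - 1))
      (fun z : ℝ => z ^ α * Real.exp (-z) * z ^ n) (Set.Ioi 0) := by
  intro x hx
  have hx' : (0:ℝ) < x := hx
  simp only
  rw [show α + (n:ℝ) + 1 - 1 = α + n by ring, Real.rpow_add hx', Real.rpow_natCast]
  ring

lemma integrable_base (α : ℝ) (hα : -1 < α) (n : ℕ) :
    IntegrableOn (fun z : ℝ => z ^ α * Real.exp (-z) * z ^ n) (Set.Ioi 0) :=
  (Real.GammaIntegral_convergent (hpos α hα n)).congr_fun (integrand_eq α n) measurableSet_Ioi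

lemma integral_base (α : ℝ) (hα : -1 < α) (n : ℕ) :
    ∫ z in Set.Ioi (0:ℝ), z ^ α * Real.exp (-z) * z ^ n = Real.Gamma (α + n + 1) := by
  rw [Real.Gamma_eq_integral (hpos α hα n)]
  exact (setIntegral_congr_fun measurableSet_Ioi (integrand_eq α n)).symm

lemma lagR_eq (i : ℕ) (α z : ℝ) :
    lagR i α z = ∑ k ∈ range (i+1), ((-1:ℝ)^k * gbinomR ((i:ℝ)+α) (i-k) / k.factorial) * z ^ k := by
  rw [lagR]; exact Finset.sum_congr rfl fun k _ => by ring

lemma gbinom_gamma (α : ℝ) (hα : -1 < α) (i : ℕ) :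
    gbinomR ((i:ℝ) + α) i * Real.Gamma (α + 1) = Real.Gamma (α + i + 1) / i.factorial := by
  have h := gamma_combine α hα i 0 (Nat.zero_le i)
  simp only [Nat.sub_zero, Nat.cast_zero, add_zero] at h
  rw [gbinomR, div_mul_eq_mul_div, h]

lemma main_le (α : ℝ) (hα : -1 < α) (i j : ℕ) (hij : i ≤ j) :
    ∫ z in Set.Ioi (0 : ℝ), z ^ α * Real.exp (-z) * lagR i α z * lagR j α z =
      if i = j then gbinomR ((i : ℝ) + α) i * Real.Gamma (α + 1) else 0 := by
  set c : ℕ → ℝ := fun k => (-1:ℝ)^k * gbinomR ((i:ℝ)+α) (i-k) / k.factorial with hc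
  set d : ℕ → ℝ := fun l => (-1:ℝ)^l * gbinomR ((j:ℝ)+α) (j-l) / l.factorial with hd
  have expand : Set.EqOn (fun z : ℝ => z ^ α * Real.exp (-z) * lagR i α z * lagR j α z)
      (fun z : ℝ => ∑ k ∈ range (i+1), ∑ l ∈ range (j+1),
        (c k * d l) * (z ^ α * Real.exp (-z) * z ^ (k+l))) (Set.Ioi 0) := by
    intro z _
    simp only
    rw [lagR_eq, lagR_eq, mul_assoc, Finset.sum_mul_sum, Finset.mul_sum]
    apply Finset.sum_congr rfl; intro k _
    rw [Finset.mul_sum]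
    apply Finset.sum_congr rfl; intro l _
    rw [pow_add]; ring
  rw [setIntegral_congr_fun measurableSet_Ioi expand]
  have hint : ∀ k l : ℕ, IntegrableOn
      (fun z : ℝ => (c k * d l) * (z ^ α * Real.exp (-z) * z ^ (k+l))) (Set.Ioi 0) :=
    fun k l => (integrable_base α hα (k+l)).const_mul _
  rw [integral_finset_sum _ (fun k _ => integrable_finset_sum _ (fun l _ => hint k l))]
  have step : ∀ k ∈ range (i+1),
      (∫ z in Set.Ioi (0:ℝ), ∑ l ∈ range (j+1), (c k * d l) * (z ^ α * Real.exp (-z) * z ^ (k+l)))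
        = ∑ l ∈ range (j+1), (c k * d l) * Real.Gamma (α + ((k+l : ℕ) : ℝ) + 1) := by
    intro k _
    rw [integral_finset_sum _ (fun l _ => hint k l)]
    exact Finset.sum_congr rfl fun l _ => by
      rw [MeasureTheory.integral_const_mul, integral_base α hα (k+l)]
  rw [Finset.sum_congr rfl step]
  have hinner : ∀ k, k ≤ j → ∑ l ∈ range (j+1), (c k * d l) * Real.Gamma (α + ((k+l : ℕ) : ℝ) + 1)
      = c k * (if k = j then (-1:ℝ)^j * Real.Gamma (α + j + 1) else 0) := by
    intro k hk
    rw [← lagInnerSum α hα j k hk, Finset.mul_sum]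
    exact Finset.sum_congr rfl fun l _ => by rw [hd]; ring
  rw [Finset.sum_congr rfl (fun k hk => hinner k (by rw [Finset.mem_range] at hk; omega))]
  by_cases h : i = j
  · subst h
    rw [Finset.sum_eq_single_of_mem i (Finset.self_mem_range_succ i)
      (fun k _ hk => by rw [if_neg hk]; ring), if_pos rfl, if_pos rfl]
    have hci : c i = (-1:ℝ)^i / i.factorial := by
      rw [hc]; simp [gbinomR]
    rw [hci, gbinom_gamma α hα i]
    have hne : ((-1:ℝ))^i ≠ 0 := by positivity
    field_simp
    rw [← pow_mul, Even.neg_one_pow ⟨i, by ring⟩, one_mul]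
  · have hz : ∀ k ∈ range (i+1), c k * (if k = j then (-1:ℝ)^j * Real.Gamma (α + j + 1) else 0) = 0 := by
      intro k hk
      rw [if_neg (by rw [Finset.mem_range] at hk; omega), mul_zero]
    rw [Finset.sum_eq_zero hz, if_neg h]

theorem laguerre_orthogonality (α : ℝ) (hα : -1 < α) (i j : ℕ) :
    ∫ z in Set.Ioi (0 : ℝ), z ^ α * Real.exp (-z) * lagR i α z * lagR j α z =
      if i = j then gbinomR ((i : ℝ) + α) i * Real.Gamma (α + 1) else 0 := by
  rcases le_total i j with h | h
  · exact main_le α hα i j h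
  · have key := main_le α hα j i h
    simp only [show ∀ z : ℝ, z ^ α * Real.exp (-z) * lagR i α z * lagR j α z
        = z ^ α * Real.exp (-z) * lagR j α z * lagR i α z from fun z => by ring]
    rw [key]
    by_cases hij : i = j
    · subst hij; simp
    · rw [if_neg (fun hji => hij hji.symm), if_neg hij]
end

section
/- For complex a, b, z with Re(a) > 0 and Re(z) > 0, Kummer's function of the second kind has the integral representation U(a,b,z) = (1/Γ(a)) ∫_0^∞ e^{-zt} t^{a-1} (1+t)^{b-a-1} dt, and this function satisfies Kummer's differential equation z·y'' + (b-z)·y' - a·y = 0. -/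
open MeasureTheory

open MeasureTheory Set Filter Real Topology

lemma bound_le_one {q t : ℝ} (ht : 0 < t) (ht1 : t ≤ 1) : (1+t) ^ q ≤ 2 ^ |q| := by
  rcases le_or_gt 0 q with hq | hq
  · rw [abs_of_nonneg hq]
    exact Real.rpow_le_rpow (by linarith) (by linarith) hq
  · calc (1+t) ^ q ≤ 1 := Real.rpow_le_one_of_one_le_of_nonpos (by linarith) hq.le
    _ ≤ 2 ^ |q| := Real.one_le_rpow one_le_two (abs_nonneg q)

lemma bound_ge_one {q t : ℝ} (ht : 1 ≤ t) : (1+t) ^ q ≤ 2 ^ |q| * t ^ |q| := by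
  rcases le_or_gt 0 q with hq | hq
  · rw [abs_of_nonneg hq, ← Real.mul_rpow (by norm_num) (by linarith)]
    exact Real.rpow_le_rpow (by linarith) (by linarith) hq
  · calc (1+t) ^ q ≤ 1 := Real.rpow_le_one_of_one_le_of_nonpos (by linarith) hq.le
    _ ≤ 2 ^ |q| * t ^ |q| := by
        have h1 : (1:ℝ) ≤ 2 ^ |q| := Real.one_le_rpow one_le_two (abs_nonneg q)
        have h2 : (1:ℝ) ≤ t ^ |q| := Real.one_le_rpow ht (abs_nonneg q)
        nlinarith

lemma integrable_aux {c p : ℝ} (hc : 0 < c) (hp : -1 < p) (q : ℝ) :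
    IntegrableOn (fun t : ℝ => t ^ p * (1+t) ^ q * Real.exp (-c * t)) (Ioi 0) := by
  have hmeas : ∀ s : Set ℝ, MeasurableSet s → s ⊆ Ioi 0 →
      AEStronglyMeasurable (fun t : ℝ => t ^ p * (1+t) ^ q * Real.exp (-c * t))
        (volume.restrict s) := by
    intro s hs hsub
    refine ContinuousOn.aestronglyMeasurable ?_ hs
    refine ContinuousOn.mul (ContinuousOn.mul ?_ ?_) (Continuous.continuousOn (by continuity))
    · exact fun x hx => (Real.continuousAt_rpow_const x p
        (Or.inl (ne_of_gt (hsub hx)))).continuousWithinAt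
    · exact fun x hx => ((Real.continuousAt_rpow_const (1+x) q
        (Or.inl (by have := hsub hx; simp only [mem_Ioi] at this; positivity))).comp
        (by continuity : Continuous fun t : ℝ => 1 + t).continuousAt).continuousWithinAt
  rw [← Ioc_union_Ioi_eq_Ioi (zero_le_one' ℝ)]
  refine IntegrableOn.union ?_ ?_
  · have hbase : IntegrableOn (fun t : ℝ => (2:ℝ) ^ |q| * t ^ p) (Ioc (0:ℝ) 1) :=
      ((intervalIntegral.intervalIntegrable_rpow' hp (a := 0) (b := 1)).1).const_mul _
    refine Integrable.mono' hbase (hmeas _ measurableSet_Ioc Ioc_subset_Ioi_self) ?_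
    · refine (ae_restrict_iff' measurableSet_Ioc).2 (ae_of_all _ fun t ht => ?_)
      obtain ⟨ht0, ht1⟩ := ht
      have h1 : Real.exp (-c*t) ≤ 1 := Real.exp_le_one_iff.2 (by nlinarith)
      rw [Real.norm_eq_abs, abs_of_nonneg (by positivity)]
      calc t ^ p * (1+t) ^ q * Real.exp (-c*t) ≤ t ^ p * (2 ^ |q|) * 1 := by
            refine mul_le_mul (mul_le_mul le_rfl (bound_le_one ht0 ht1) (by positivity)
              (by positivity)) h1 (by positivity) (by positivity)
        _ = 2 ^ |q| * t ^ p := by ring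
  · have hint : IntegrableOn (fun t : ℝ => 2 ^ |q| * (t ^ (p + |q|) * Real.exp (-c * t)))
        (Ioi 1) := by
      have h0 := ((integrableOn_rpow_mul_exp_neg_mul_rpow
        (show -1 < p + |q| by linarith [abs_nonneg q]) zero_lt_one hc).mono_set
        (Ioi_subset_Ioi zero_le_one)).const_mul ((2:ℝ) ^ |q|)
      refine IntegrableOn.congr_fun h0 (fun t ht => by simp [Real.rpow_one]) measurableSet_Ioi
    refine Integrable.mono' hint (hmeas _ measurableSet_Ioi (Ioi_subset_Ioi zero_le_one)) ?_
    refine (ae_restrict_iff' measurableSet_Ioi).2 (ae_of_all _ fun t ht => ?_)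
    have ht1 : (1:ℝ) ≤ t := le_of_lt ht
    have ht0 : (0:ℝ) < t := lt_of_lt_of_le zero_lt_one ht1
    rw [Real.norm_eq_abs, abs_of_nonneg (by positivity)]
    calc t ^ p * (1+t) ^ q * Real.exp (-c*t)
        ≤ t ^ p * (2 ^ |q| * t ^ |q|) * Real.exp (-c*t) := by
          refine mul_le_mul (mul_le_mul le_rfl (bound_ge_one ht1) (by positivity)
            (by positivity)) le_rfl (by positivity) (by positivity)
      _ = 2 ^ |q| * (t ^ (p + |q|) * Real.exp (-c*t)) := by
          rw [Real.rpow_add ht0]; ring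

noncomputable def kerU (a b z : ℂ) (t : ℝ) : ℂ :=
  Complex.exp (-z * t) * (t : ℂ) ^ (a - 1) * ((1 : ℂ) + t) ^ (b - a - 1)

lemma ofReal_one_add (t : ℝ) : ((1 : ℂ) + t) = ((1 + t : ℝ) : ℂ) := by push_cast; ring

lemma norm_aux (z u v : ℂ) {t : ℝ} (ht : 0 < t) :
    ‖Complex.exp (-z * t) * (t : ℂ) ^ u * ((1 : ℂ) + t) ^ v‖
      = t ^ u.re * (1 + t) ^ v.re * Real.exp (-z.re * t) := by
  rw [norm_mul, norm_mul, ofReal_one_add,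
    Complex.norm_exp, Complex.norm_cpow_eq_rpow_re_of_pos ht,
    Complex.norm_cpow_eq_rpow_re_of_pos (by linarith : (0:ℝ) < 1 + t)]
  have : (-z * t).re = -z.re * t := by simp [Complex.mul_re]
  rw [this]; ring

lemma norm_ker (a b z : ℂ) (n : ℕ) {t : ℝ} (ht : 0 < t) :
    ‖(t : ℂ) ^ n * kerU a b z t‖
      = t ^ ((n : ℝ) + a.re - 1) * (1 + t) ^ (b.re - a.re - 1) * Real.exp (-z.re * t) := by
  rw [norm_mul, kerU, norm_aux z _ _ ht]
  have h1 : ‖(t : ℂ) ^ n‖ = t ^ (n : ℝ) := by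
    rw [norm_pow, Complex.norm_real, Real.norm_eq_abs, abs_of_pos ht, ← Real.rpow_natCast]
  rw [h1, show ((n:ℝ) + a.re - 1) = (n:ℝ) + (a.re - 1) by ring, Real.rpow_add ht]
  simp [Complex.sub_re, Complex.one_re]; ring

lemma ker_meas (a b z : ℂ) (n : ℕ) :
    AEStronglyMeasurable (fun t : ℝ => (t : ℂ) ^ n * kerU a b z t)
      (volume.restrict (Ioi 0)) := by
  refine ContinuousOn.aestronglyMeasurable ?_ measurableSet_Ioi
  intro t ht
  have ht' : (0:ℝ) < t := ht
  refine ContinuousWithinAt.mul ?_ (ContinuousWithinAt.mul (ContinuousWithinAt.mul ?_ ?_) ?_)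
  · exact ((Complex.continuous_ofReal.pow n)).continuousWithinAt
  · exact (Complex.continuous_exp.comp
      (continuous_const.mul Complex.continuous_ofReal)).continuousWithinAt
  · exact (Complex.continuousAt_ofReal_cpow_const t _ (Or.inr ht'.ne')).continuousWithinAt
  · have : ContinuousAt (fun t : ℝ => ((1 : ℂ) + t) ^ (b - a - 1)) t := by
      have hc : ContinuousAt (fun s : ℝ => ((s : ℂ)) ^ (b - a - 1)) (1 + t) :=
        Complex.continuousAt_ofReal_cpow_const _ _ (Or.inr (by positivity))
      have := hc.comp ((continuous_const.add continuous_id).continuousAt (x := t))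
      refine this.congr ?_
      filter_upwards with s using by rw [Function.comp]; rw [ofReal_one_add]
    exact this.continuousWithinAt

lemma ker_int (a b : ℂ) (ha : 0 < a.re) {c : ℝ} (hc : 0 < c) (n : ℕ) {z : ℂ}
    (hz : c ≤ z.re) :
    IntegrableOn (fun t : ℝ => (t : ℂ) ^ n * kerU a b z t) (Ioi 0) := by
  refine Integrable.mono' (integrable_aux hc (show -1 < (n : ℝ) + a.re - 1 by
    have : (0:ℝ) ≤ n := Nat.cast_nonneg n; linarith) (b.re - a.re - 1))
    (ker_meas a b z n) ?_
  refine (ae_restrict_iff' measurableSet_Ioi).2 (ae_of_all _ fun t ht => ?_)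
  have ht' : (0:ℝ) < t := ht
  rw [norm_ker a b z n ht']
  have : Real.exp (-z.re * t) ≤ Real.exp (-c * t) := by
    apply Real.exp_le_exp.2; nlinarith
  have h0 : (0:ℝ) ≤ t ^ ((n : ℝ) + a.re - 1) * (1 + t) ^ (b.re - a.re - 1) := by positivity
  nlinarith [mul_le_mul_of_nonneg_left this h0]

lemma hasDerivAt_K (a b : ℂ) (ha : 0 < a.re) (n : ℕ) {z : ℂ} (hz : 0 < z.re) :
    HasDerivAt (fun w => ∫ t in Ioi (0:ℝ), (t : ℂ) ^ n * kerU a b w t)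
      (∫ t in Ioi (0:ℝ), -((t : ℂ) ^ (n+1) * kerU a b z t)) z := by
  set c : ℝ := z.re / 2 with hc
  have hcpos : 0 < c := by positivity
  have key := hasDerivAt_integral_of_dominated_loc_of_deriv_le (μ := volume.restrict (Ioi 0))
    (F := fun w (t : ℝ) => (t : ℂ) ^ n * kerU a b w t)
    (F' := fun w (t : ℝ) => -((t : ℂ) ^ (n+1) * kerU a b w t))
    (x₀ := z)
    (bound := fun t : ℝ => t ^ (((n:ℝ)+1) + a.re - 1) * (1+t) ^ (b.re - a.re - 1)
      * Real.exp (-c * t))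
    (s := Metric.ball z c) (Metric.ball_mem_nhds z hcpos)
    (Filter.Eventually.of_forall fun w => ker_meas a b w n)
    (ker_int a b ha hcpos n (z := z) (by linarith))
    ((ker_meas a b z (n+1)).neg)
    ?_ (integrable_aux hcpos (by have : (0:ℝ) ≤ n := Nat.cast_nonneg n; linarith)
      (b.re - a.re - 1)) ?_
  · refine key.2.congr_deriv ?_
    congr 1
  · refine (ae_restrict_iff' measurableSet_Ioi).2 (ae_of_all _ fun t ht => fun w hw => ?_)
    have ht' : (0:ℝ) < t := ht
    have hwre : c ≤ w.re := by
      have h1 : dist w z < c := Metric.mem_ball.1 hw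
      have h2 : |(w - z).re| ≤ ‖w - z‖ := Complex.abs_re_le_norm _
      rw [Complex.dist_eq] at h1
      have := abs_le.1 (h2.trans h1.le) |>.1
      simp only [Complex.sub_re] at this
      have : z.re - c ≤ w.re := by linarith
      simpa [hc] using by linarith
    rw [norm_neg, norm_ker a b w (n+1) ht']
    have hexp : Real.exp (-w.re * t) ≤ Real.exp (-c * t) := by
      apply Real.exp_le_exp.2; nlinarith
    have h0 : (0:ℝ) ≤ t ^ (((n:ℕ)+1 : ℝ) + a.re - 1) * (1 + t) ^ (b.re - a.re - 1) := by
      positivity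
    push_cast
    push_cast at h0
    nlinarith [mul_le_mul_of_nonneg_left hexp h0]
  · refine (ae_restrict_iff' measurableSet_Ioi).2 (ae_of_all _ fun t ht => fun w hw => ?_)
    have hd : HasDerivAt (fun x : ℂ => Complex.exp (-x * t))
        (Complex.exp (-w * t) * (-(t:ℂ))) w := by
      have h1 : HasDerivAt (fun x : ℂ => -x * (t:ℂ)) (-(t:ℂ)) w := by
        simpa using ((hasDerivAt_id w).neg.mul_const (t:ℂ))
      exact h1.cexp
    have := (((hd.mul_const ((t:ℂ) ^ (a-1))).mul_const
        (((1:ℂ) + t) ^ (b - a - 1))).const_mul ((t:ℂ) ^ n))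
    refine this.congr_deriv ?_
    simp only [kerU]
    ring

lemma key_identity (a b : ℂ) (ha : 0 < a.re) {z : ℂ} (hz : 0 < z.re) :
    ∫ t in Ioi (0:ℝ), (z * ((t:ℂ)^2 * kerU a b z t) - (b - z) * ((t:ℂ)^1 * kerU a b z t)
      - a * ((t:ℂ)^0 * kerU a b z t)) = 0 := by
  set φ : ℝ → ℂ := fun t => -(Complex.exp (-z * t) * (t:ℂ) ^ a * ((1:ℂ) + t) ^ (b - a)) with hφ
  have ha0 : a ≠ 0 := fun h => by simp [h] at ha
  have hderiv : ∀ t ∈ Ioi (0:ℝ), HasDerivAt φ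
      (z * ((t:ℂ)^2 * kerU a b z t) - (b - z) * ((t:ℂ)^1 * kerU a b z t)
        - a * ((t:ℂ)^0 * kerU a b z t)) t := by
    intro t ht
    have ht' : (0:ℝ) < t := ht
    have h0 : HasDerivAt (fun s : ℝ => (s:ℂ)) 1 t := Complex.ofRealCLM.hasDerivAt
    have hexp : HasDerivAt (fun s : ℝ => Complex.exp (-z * s))
        (Complex.exp (-z * t) * (-z * 1)) t := (h0.const_mul (-z)).cexp
    have hpow : HasDerivAt (fun s : ℝ => (s:ℂ) ^ a) (a * (t:ℂ) ^ (a - 1) * 1) t := by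
      have := ((hasDerivAt_id ((t:ℝ):ℂ)).cpow_const (c := a)
        (Complex.mem_slitPlane_iff.2 (Or.inl (by simpa using ht')))).comp_ofReal
      simpa using this
    have hpow2 : HasDerivAt (fun s : ℝ => ((1:ℂ) + s) ^ (b - a))
        ((b - a) * ((1:ℂ) + t) ^ (b - a - 1) * 1) t := by
      have := (((hasDerivAt_id ((t:ℝ):ℂ)).const_add 1).cpow_const (c := b - a)
        (Complex.mem_slitPlane_iff.2 (Or.inl (by simp; linarith)))).comp_ofReal
      simpa using this
    have hprod := ((hexp.mul hpow).mul hpow2).neg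
    have hA : (t:ℂ) ^ a = (t:ℂ) ^ (a - 1) * t := by
      have h := Complex.cpow_add (a - 1) 1 (x := (t:ℂ)) (Complex.ofReal_ne_zero.2 ht'.ne')
      rw [sub_add_cancel, Complex.cpow_one] at h
      exact h
    have hB : ((1:ℂ) + t) ^ (b - a) = ((1:ℂ) + t) ^ (b - a - 1) * ((1:ℂ) + t) := by
      have hne : ((1:ℂ) + t) ≠ 0 := by
        intro h
        have := congrArg Complex.re h
        simp at this; linarith
      have h := Complex.cpow_add (b - a - 1) 1 (x := (1:ℂ) + t) hne
      rw [sub_add_cancel, Complex.cpow_one] at h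
      exact h
    rw [hA, hB] at hprod
    refine hprod.congr_deriv ?_
    simp only [kerU, Pi.mul_apply, hA]
    ring
  have hcont : ContinuousWithinAt φ (Ici (0:ℝ)) 0 := by
    refine ContinuousAt.continuousWithinAt ?_
    refine ContinuousAt.neg (ContinuousAt.mul (ContinuousAt.mul ?_ ?_) ?_)
    · exact (Complex.continuous_exp.comp
        (continuous_const.mul Complex.continuous_ofReal)).continuousAt
    · exact (Complex.continuous_ofReal_cpow_const ha).continuousAt
    · have hc : ContinuousAt (fun s : ℝ => ((s : ℂ)) ^ (b - a)) (1 + 0 : ℝ) :=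
        Complex.continuousAt_ofReal_cpow_const _ _ (Or.inr (by norm_num))
      have := hc.comp ((continuous_const.add continuous_id).continuousAt (x := (0:ℝ)))
      refine this.congr ?_
      filter_upwards with s using by rw [Function.comp]; rw [ofReal_one_add]
  have hzero : φ 0 = 0 := by
    simp only [hφ, Complex.ofReal_zero]
    rw [Complex.zero_cpow ha0]
    ring
  have htend : Tendsto φ atTop (𝓝 0) := by
    apply squeeze_zero_norm' (a := fun t : ℝ =>
      (2 ^ |b.re - a.re| ) * (t ^ (a.re + |b.re - a.re|) * Real.exp (-z.re * t)))
    · filter_upwards [Filter.eventually_ge_atTop (1:ℝ)] with t ht1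
      have ht' : (0:ℝ) < t := lt_of_lt_of_le zero_lt_one ht1
      rw [hφ]
      simp only [norm_neg]
      rw [norm_aux z a (b - a) ht']
      have hb1 : (1+t) ^ (b - a).re ≤ 2 ^ |b.re - a.re| * t ^ |b.re - a.re| := by
        have := bound_ge_one (q := (b-a).re) ht1
        simpa [Complex.sub_re] using this
      have hexp : (0:ℝ) < Real.exp (-z.re * t) := Real.exp_pos _
      calc t ^ a.re * (1+t) ^ (b-a).re * Real.exp (-z.re * t)
          ≤ t ^ a.re * (2 ^ |b.re - a.re| * t ^ |b.re - a.re|) * Real.exp (-z.re * t) := by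
            refine mul_le_mul (mul_le_mul le_rfl hb1 (by positivity) (by positivity))
              le_rfl (by positivity) (by positivity)
        _ = 2 ^ |b.re - a.re| * (t ^ (a.re + |b.re - a.re|) * Real.exp (-z.re * t)) := by
            rw [Real.rpow_add ht']; ring
    · have := (tendsto_rpow_mul_exp_neg_mul_atTop_nhds_zero (a.re + |b.re - a.re|)
        z.re hz).const_mul ((2:ℝ) ^ |b.re - a.re|)
      simpa using this
  have hint : IntegrableOn (fun t : ℝ => z * ((t:ℂ)^2 * kerU a b z t)
      - (b - z) * ((t:ℂ)^1 * kerU a b z t) - a * ((t:ℂ)^0 * kerU a b z t)) (Ioi 0) := by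
    exact (((ker_int a b ha hz 2 le_rfl).const_mul z).sub
      ((ker_int a b ha hz 1 le_rfl).const_mul (b - z))).sub
      ((ker_int a b ha hz 0 le_rfl).const_mul a)
  have := integral_Ioi_of_hasDerivAt_of_tendsto hcont hderiv hint htend
  rw [this, hzero, sub_zero]

/-- Kummer's function of the second kind, defined via the Laplace-type integral
U(a,b,z) = (1/Γ(a)) ∫_0^∞ e^{-zt} t^{a-1} (1+t)^{b-a-1} dt. -/
noncomputable def kummerU (a b z : ℂ) : ℂ :=
  (1 / Complex.Gamma a) *
    ∫ t in Set.Ioi (0 : ℝ), Complex.exp (-z * t) * (t : ℂ) ^ (a - 1) * ((1 : ℂ) + t) ^ (b - a - 1)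

theorem kummerU_solves_kummer_ode (a b : ℂ) (ha : 0 < a.re) :
    ∀ z : ℂ, 0 < z.re →
      z * deriv (deriv (fun w => kummerU a b w)) z
        + (b - z) * deriv (fun w => kummerU a b w) z - a * kummerU a b z = 0 := by
  intro z hz
  set Kf : ℕ → ℂ → ℂ := fun n w => ∫ t in Ioi (0:ℝ), (t:ℂ) ^ n * kerU a b w t with hKf
  have hU : (fun w => kummerU a b w) = fun w => (1 / Complex.Gamma a) * Kf 0 w := by
    funext w
    simp only [kummerU, hKf, kerU, pow_zero, one_mul]
  have hKd : ∀ (n : ℕ) (w : ℂ), 0 < w.re → HasDerivAt (Kf n) (-(Kf (n+1) w)) w := by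
    intro n w hw
    have h := hasDerivAt_K a b ha n hw
    rw [integral_neg] at h
    exact h
  have hd1 : ∀ w : ℂ, 0 < w.re → HasDerivAt (fun w => kummerU a b w)
      ((1 / Complex.Gamma a) * -(Kf 1 w)) w := by
    intro w hw
    rw [hU]
    exact HasDerivAt.const_mul _ (hKd 0 w hw)
  have hD1 : deriv (fun w => kummerU a b w) z = (1 / Complex.Gamma a) * -(Kf 1 z) :=
    (hd1 z hz).deriv
  have hEv : deriv (fun w => kummerU a b w)
      =ᶠ[nhds z] fun w => (1 / Complex.Gamma a) * -(Kf 1 w) := by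
    filter_upwards [(isOpen_lt continuous_const Complex.continuous_re).mem_nhds hz] with w hw
    exact (hd1 w hw).deriv
  have hd2 : HasDerivAt (fun w => (1 / Complex.Gamma a) * -(Kf 1 w))
      ((1 / Complex.Gamma a) * Kf 2 z) z := by
    have h := (hKd 1 z hz).neg
    have h2 := HasDerivAt.const_mul (1 / Complex.Gamma a) h
    simpa using h2
  have hD2 : deriv (deriv (fun w => kummerU a b w)) z = (1 / Complex.Gamma a) * Kf 2 z := by
    rw [Filter.EventuallyEq.deriv_eq hEv]
    exact hd2.deriv
  have key : z * Kf 2 z - (b - z) * Kf 1 z - a * Kf 0 z = 0 := by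
    have hki := key_identity a b ha hz
    have hI2 : IntegrableOn (fun t : ℝ => z * ((t:ℂ)^2 * kerU a b z t)) (Ioi 0) :=
      (ker_int a b ha hz 2 le_rfl).const_mul z
    have hI1 : IntegrableOn (fun t : ℝ => (b - z) * ((t:ℂ)^1 * kerU a b z t)) (Ioi 0) :=
      (ker_int a b ha hz 1 le_rfl).const_mul (b - z)
    have hI0 : IntegrableOn (fun t : ℝ => a * ((t:ℂ)^0 * kerU a b z t)) (Ioi 0) :=
      (ker_int a b ha hz 0 le_rfl).const_mul a
    have hI21 : IntegrableOn (fun t : ℝ => z * ((t:ℂ)^2 * kerU a b z t)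
        - (b - z) * ((t:ℂ)^1 * kerU a b z t)) (Ioi 0) := hI2.sub hI1
    rw [integral_sub hI21 hI0, integral_sub hI2 hI1,
      MeasureTheory.integral_const_mul, MeasureTheory.integral_const_mul,
      MeasureTheory.integral_const_mul] at hki
    exact hki
  have hU0 : kummerU a b z = (1 / Complex.Gamma a) * Kf 0 z := congrFun hU z
  rw [hD2, hD1, hU0]
  linear_combination (1 / Complex.Gamma a) * key
end

section
/- For every nonnegative integer i and all real z, the Fourier transform of f(z) = e^{-πz²} L_i^{(α)}(πz²) is (-1)^i e^{-πk²} L_i^{(-i-α-1/2)}(πk²); that is, ∫_{-∞}^{∞} e^{-πz²} L_i^{(α)}(πz²) e^{-2πikz} dz = (-1)^i e^{-πk²} L_i^{(-i-α-1/2)}(πk²). -/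
open Finset
open scoped Nat

lemma gbinom_zero (x : ℂ) : gbinom x 0 = 1 := by simp [gbinom]

lemma gbinom_absorb (x : ℂ) (n : ℕ) :
    (n + 1 : ℂ) * gbinom x (n + 1) = x * gbinom (x - 1) n := by
  have h : ∏ j ∈ Finset.range (n + 1), (x - j) = x * ∏ j ∈ Finset.range n, (x - 1 - j) := by
    rw [Finset.prod_range_succ']
    simp only [Nat.cast_zero, sub_zero, mul_comm]
    congr 1
    refine Finset.prod_congr rfl fun j _ => ?_
    push_cast; ring
  simp only [gbinom, h, Nat.factorial_succ]
  have h1 : ((n : ℂ) + 1) ≠ 0 := Nat.cast_add_one_ne_zero n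
  have h2 : (n.factorial : ℂ) ≠ 0 := by exact_mod_cast n.factorial_ne_zero
  push_cast
  field_simp

lemma gbinom_vandermonde : ∀ (n : ℕ) (x y : ℂ),
    ∑ s ∈ Finset.range (n + 1), gbinom x s * gbinom y (n - s) = gbinom (x + y) n := by
  intro n
  induction n with
  | zero => intro x y; simp [gbinom_zero]
  | succ n ih =>
    intro x y
    have key : ((n : ℂ) + 1) * ∑ s ∈ Finset.range (n + 2), gbinom x s * gbinom y (n + 1 - s)
        = ((n : ℂ) + 1) * gbinom (x + y) (n + 1) := by
      have expand : ∀ s ∈ Finset.range (n + 2),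
          ((n : ℂ) + 1) * (gbinom x s * gbinom y (n + 1 - s))
          = (s : ℂ) * gbinom x s * gbinom y (n + 1 - s)
            + gbinom x s * (((n + 1 - s : ℕ) : ℂ) * gbinom y (n + 1 - s)) := by
        intro s hs
        have hsle : s ≤ n + 1 := by
          simpa [Nat.lt_succ_iff] using Finset.mem_range.mp hs
        have : ((n + 1 - s : ℕ) : ℂ) = (n : ℂ) + 1 - s := by
          push_cast [Nat.cast_sub (by omega : s ≤ n + 1)]; ring
        rw [this]; ring
      rw [Finset.mul_sum, Finset.sum_congr rfl expand, Finset.sum_add_distrib]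
      -- first sum
      have h1 : ∑ s ∈ Finset.range (n + 2), (s : ℂ) * gbinom x s * gbinom y (n + 1 - s)
          = x * gbinom (x - 1 + y) n := by
        rw [Finset.sum_range_succ' (fun s => (s : ℂ) * gbinom x s * gbinom y (n + 1 - s))]
        simp only [Nat.cast_zero, zero_mul, add_zero, Nat.cast_succ]
        have : ∀ s ∈ Finset.range (n + 1),
            ((s : ℂ) + 1) * gbinom x (s + 1) * gbinom y (n + 1 - (s + 1))
            = x * (gbinom (x - 1) s * gbinom y (n - s)) := by
          intro s hs
          rw [show n + 1 - (s + 1) = n - s by omega, gbinom_absorb]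
          ring
        rw [Finset.sum_congr rfl this, ← Finset.mul_sum, ih]
      -- second sum
      have h2 : ∑ s ∈ Finset.range (n + 2),
            gbinom x s * (((n + 1 - s : ℕ) : ℂ) * gbinom y (n + 1 - s))
          = y * gbinom (x + (y - 1)) n := by
        rw [Finset.sum_range_succ]
        simp only [Nat.sub_self, Nat.cast_zero, zero_mul, mul_zero, add_zero]
        have : ∀ s ∈ Finset.range (n + 1),
            gbinom x s * (((n + 1 - s : ℕ) : ℂ) * gbinom y (n + 1 - s))
            = y * (gbinom x s * gbinom (y - 1) (n - s)) := by
          intro s hs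
          have hsle : s ≤ n := by simpa [Nat.lt_succ_iff] using Finset.mem_range.mp hs
          rw [show n + 1 - s = (n - s) + 1 by omega]
          rw [show ((n - s + 1 : ℕ) : ℂ) = ((n - s : ℕ) : ℂ) + 1 by push_cast; ring]
          rw [gbinom_absorb]
          ring
        rw [Finset.sum_congr rfl this, ← Finset.mul_sum, ih]
      rw [h1, h2]
      have habs := gbinom_absorb (x + y) n
      rw [show x + y - 1 = x - 1 + y by ring] at habs
      rw [show x + (y - 1) = x - 1 + y by ring]
      rw [show ((n : ℂ) + 1) * gbinom (x + y) (n + 1) = ((n : ℕ) + 1 : ℂ) * gbinom (x + y) (n + 1) by norm_num, habs]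
      ring
    have hne : ((n : ℂ) + 1) ≠ 0 := Nat.cast_add_one_ne_zero n
    exact mul_left_cancel₀ hne key

lemma gbinom_reflect (x : ℂ) (n : ℕ) :
    gbinom x n = (-1 : ℂ) ^ n * gbinom ((n : ℂ) - 1 - x) n := by
  unfold gbinom
  rw [← mul_div_assoc]
  congr 1
  rw [← Finset.prod_range_reflect (fun j => (x - j)) n]
  have : ∀ j ∈ Finset.range n, x - ((n - 1 - j : ℕ) : ℂ)
      = (-1) * (((n : ℂ) - 1 - x) - j) := by
    intro j hj
    have hj' : j < n := Finset.mem_range.mp hj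
    have : ((n - 1 - j : ℕ) : ℂ) = (n : ℂ) - 1 - j := by
      push_cast [Nat.cast_sub (by omega : j ≤ n - 1), Nat.cast_sub (by omega : 1 ≤ n)]
      ring
    rw [this]; ring
  rw [Finset.prod_congr rfl this, Finset.prod_mul_distrib, Finset.prod_const]
  simp [Finset.card_range]



lemma poch_fact (t : ℕ) : ∀ s : ℕ,
    (∏ r ∈ Finset.range s, ((t : ℂ) + 1/2 + r)) * ((t+s).factorial * 4^s * (2*t).factorial)
      = (2*(t+s)).factorial * t.factorial := by
  intro s
  induction s with
  | zero => simp; ring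
  | succ s ih =>
    rw [Finset.prod_range_succ]
    have e1 : (t + (s+1)).factorial = (t + s + 1) * (t + s).factorial := by
      rw [show t + (s+1) = (t+s) + 1 by ring, Nat.factorial_succ]
    have e2 : (2*(t+(s+1))).factorial
        = (2*(t+s)+2) * ((2*(t+s)+1) * (2*(t+s)).factorial) := by
      rw [show 2*(t+(s+1)) = (2*(t+s)+1) + 1 by ring, Nat.factorial_succ, Nat.factorial_succ]
    rw [e1, e2]
    push_cast
    push_cast at ih
    linear_combination (4*((t:ℂ)+s+1/2)*((t:ℂ)+s+1)) * ih

lemma dfact_fact (s : ℕ) : ((2*s).factorial : ℂ) = (2*s-1)‼ * 2^s * s.factorial := by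
  cases s with
  | zero => simp
  | succ s =>
    have h : (2*(s+1)) = (2*s+1) + 1 := by ring
    rw [h, Nat.factorial_eq_mul_doubleFactorial (2*s+1),
      show (2*s+1+1) = 2*(s+1) by ring, Nat.doubleFactorial_two_mul,
      show 2*(s+1)-1 = 2*s+1 from rfl]
    push_cast
    ring

lemma gbinom_neg_half (t s : ℕ) :
    (-1:ℂ)^s * (gbinom (-(t:ℂ) - 1/2) s * s.factorial)
      = ∏ r ∈ Finset.range s, ((t : ℂ) + 1/2 + r) := by
  unfold gbinom
  have hfs : (s.factorial : ℂ) ≠ 0 := by exact_mod_cast Nat.factorial_ne_zero s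
  rw [div_mul_cancel₀ _ hfs]
  have h1 : ∀ r ∈ Finset.range s, (-(t:ℂ) - 1/2 - r) = (-1) * ((t:ℂ) + 1/2 + r) := by
    intro r hr; ring
  rw [Finset.prod_congr rfl h1, Finset.prod_mul_distrib, Finset.prod_const, Finset.card_range,
    ← mul_assoc, ← mul_pow]
  norm_num

lemma key_D (t s : ℕ) :
    ((2*s-1)‼ : ℂ) * ((2*(t+s)).choose (2*t)) / (2^s * (t+s).factorial)
      = (-1:ℂ)^s * gbinom (-(t:ℂ) - 1/2) s / t.factorial := by
  have hch : ((2*(t+s)).choose (2*t) : ℂ) * (2*t).factorial * (2*s).factorial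
      = ((2*(t+s)).factorial : ℂ) := by
    have h := Nat.choose_mul_factorial_mul_factorial (by omega : 2*t ≤ 2*(t+s))
    rw [show 2*(t+s) - 2*t = 2*s by omega] at h
    exact_mod_cast congrArg (fun m : ℕ => (m : ℂ)) h
  have hpoch := poch_fact t s
  have hd := dfact_fact s
  have hG := gbinom_neg_half t s
  have h4 : ((4:ℂ))^s = 2^s * 2^s := by rw [← mul_pow]; norm_num
  have hfs : (s.factorial : ℂ) ≠ 0 := by exact_mod_cast Nat.factorial_ne_zero s
  have hft : (t.factorial : ℂ) ≠ 0 := by exact_mod_cast Nat.factorial_ne_zero t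
  have hfts : ((t+s).factorial : ℂ) ≠ 0 := by exact_mod_cast Nat.factorial_ne_zero (t+s)
  have h2tf : ((2*t).factorial : ℂ) ≠ 0 := by exact_mod_cast Nat.factorial_ne_zero (2*t)
  have h2s : ((2:ℂ))^s ≠ 0 := pow_ne_zero s two_ne_zero
  rw [div_eq_div_iff (mul_ne_zero h2s hfts) hft]
  apply mul_left_cancel₀ (mul_ne_zero (mul_ne_zero h2s hfs) h2tf)
  linear_combination (-(((2*(t+s)).choose (2*t):ℂ)) * t.factorial * (2*t).factorial) * hd
    + (t.factorial : ℂ) * hch - hpoch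
    + ((∏ r ∈ Finset.range s, ((t:ℂ)+1/2+r)) * ((t+s).factorial : ℂ) * ((2*t).factorial : ℂ)) * h4
    - ((2:ℂ)^s * (2:ℂ)^s * ((2*t).factorial : ℂ) * ((t+s).factorial : ℂ)) * hG

lemma key_sum (i t : ℕ) (α : ℂ) (ht : t ≤ i) :
    ∑ s ∈ Finset.range (i - t + 1), gbinom ((i:ℂ) + α) (i - t - s)
        * ((-1:ℂ)^s * (((2*s-1)‼ : ℂ) * ((2*(t+s)).choose (2*t)) / (2^s * (t+s).factorial)))
      = (-1:ℂ)^(i-t) * gbinom (-α - 1/2) (i-t) / t.factorial := by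
  set n := i - t with hn
  have hstep : ∀ s ∈ Finset.range (n+1),
      gbinom ((i:ℂ) + α) (n - s)
          * ((-1:ℂ)^s * (((2*s-1)‼ : ℂ) * ((2*(t+s)).choose (2*t)) / (2^s * (t+s).factorial)))
        = (gbinom (-(t:ℂ) - 1/2) s * gbinom ((i:ℂ) + α) (n - s)) / t.factorial := by
    intro s hs
    rw [key_D]
    have hsq : (-1:ℂ)^s * (-1:ℂ)^s = 1 := by
      rw [← pow_add, ← two_mul, pow_mul]; norm_num
    calc gbinom ((i:ℂ) + α) (n - s) * ((-1:ℂ)^s * ((-1:ℂ)^s * gbinom (-(t:ℂ) - 1/2) s / t.factorial))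
        = ((-1:ℂ)^s * (-1:ℂ)^s) * (gbinom (-(t:ℂ) - 1/2) s * gbinom ((i:ℂ) + α) (n - s) / t.factorial) := by
          ring
      _ = gbinom (-(t:ℂ) - 1/2) s * gbinom ((i:ℂ) + α) (n - s) / t.factorial := by
          rw [hsq, one_mul]
  rw [Finset.sum_congr rfl hstep, ← Finset.sum_div,
    gbinom_vandermonde n (-(t:ℂ) - 1/2) ((i:ℂ) + α)]
  have hcast : ((i:ℂ)) = (n : ℂ) + (t : ℂ) := by
    rw [hn]; push_cast [Nat.cast_sub ht]; ring
  have hrefl : gbinom (-(t:ℂ) - 1/2 + ((i:ℂ) + α)) n = (-1:ℂ)^n * gbinom (-α - 1/2) n := by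
    rw [gbinom_reflect (-(t:ℂ) - 1/2 + ((i:ℂ) + α)) n, hcast,
      show ((n:ℂ) - 1 - (-(t:ℂ) - 1/2 + (((n:ℂ) + (t:ℂ)) + α))) = -α - 1/2 by ring]
  rw [hrefl, mul_div_assoc]

open Finset MeasureTheory FourierTransform Polynomial
open scoped Nat

noncomputable def cg : ℝ → ℂ := fun x => Complex.exp (-(↑Real.pi * (x:ℂ)^2))

lemma pi_half_pos : (0:ℝ) < Real.pi - 1/2 := by
  have := Real.pi_gt_three; linarith

lemma bound_pow_gauss (n : ℕ) (x : ℝ) :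
    |x|^n * Real.exp (-(Real.pi * x^2))
      ≤ n.factorial * Real.exp (1/2) * Real.exp (-((Real.pi - 1/2) * x^2)) := by
  have h1 : |x|^n ≤ n.factorial * Real.exp |x| := by
    have h := Real.pow_div_factorial_le_exp (x := |x|) (abs_nonneg x) n
    have hf : (0:ℝ) < n.factorial := by positivity
    calc |x|^n = (|x|^n / n.factorial) * n.factorial := by field_simp
      _ ≤ Real.exp |x| * n.factorial := mul_le_mul_of_nonneg_right h hf.le
      _ = n.factorial * Real.exp |x| := mul_comm _ _
  have h2 : |x| ≤ x^2/2 + 1/2 := by nlinarith [sq_nonneg (|x| - 1), sq_abs x]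
  calc |x|^n * Real.exp (-(Real.pi * x^2))
      ≤ (n.factorial * Real.exp |x|) * Real.exp (-(Real.pi * x^2)) :=
        mul_le_mul_of_nonneg_right h1 (Real.exp_pos _).le
    _ = n.factorial * Real.exp (|x| - Real.pi * x^2) := by
        rw [mul_assoc, ← Real.exp_add]; ring_nf
    _ ≤ n.factorial * Real.exp (x^2/2 + 1/2 - Real.pi * x^2) := by
        have hf : (0:ℝ) ≤ n.factorial := by positivity
        exact mul_le_mul_of_nonneg_left (Real.exp_le_exp.mpr (by linarith)) hf
    _ = n.factorial * Real.exp (1/2) * Real.exp (-((Real.pi - 1/2) * x^2)) := by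
        rw [mul_assoc, ← Real.exp_add]; ring_nf

lemma integrable_main (n : ℕ) (k : ℝ) :
    Integrable (fun z : ℝ => (z:ℂ)^n * Complex.exp (-(↑Real.pi * (z:ℂ)^2))
      * Complex.exp (-(2 * ↑Real.pi * Complex.I * (k:ℂ) * (z:ℂ)))) := by
  have hbase : Integrable (fun x : ℝ => Real.exp (-((Real.pi - 1/2) * x^2))) := by
    have h := integrable_exp_neg_mul_sq pi_half_pos
    apply h.congr
    filter_upwards with x
    rw [neg_mul]
  have hmaj : Integrable (fun x : ℝ =>
      (n.factorial : ℝ) * Real.exp (1/2) * Real.exp (-((Real.pi - 1/2) * x^2))) :=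
    hbase.const_mul _
  refine hmaj.mono' ?_ ?_
  · apply Continuous.aestronglyMeasurable
    apply Continuous.mul
    apply Continuous.mul
    · exact (Complex.continuous_ofReal.pow n)
    · exact Complex.continuous_exp.comp (by fun_prop)
    · exact Complex.continuous_exp.comp (by fun_prop)
  · filter_upwards with z
    have habs1 : ‖Complex.exp (-(↑Real.pi * (z:ℂ)^2))‖ = Real.exp (-(Real.pi * z^2)) := by
      rw [
        show (-(↑Real.pi * (z:ℂ)^2)) = ((-(Real.pi * z^2) : ℝ) : ℂ) by push_cast; ring,
        Complex.norm_exp_ofReal]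
    have habs2 : ‖Complex.exp (-(2 * ↑Real.pi * Complex.I * (k:ℂ) * (z:ℂ)))‖ = 1 := by
      rw [Complex.norm_exp]
      have : (-(2 * ↑Real.pi * Complex.I * (k:ℂ) * (z:ℂ))).re = 0 := by
        simp [Complex.mul_re, Complex.mul_im]
      rw [this, Real.exp_zero]
    rw [norm_mul, norm_mul, habs1, habs2, mul_one, norm_pow, Complex.norm_real,
      Real.norm_eq_abs]
    exact bound_pow_gauss n z

lemma deriv_ofReal_comp (h : ℝ → ℝ) (x : ℝ) :
    deriv (fun t => ((h t : ℝ) : ℂ)) x = ((deriv h x : ℝ) : ℂ) := by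
  by_cases hd : DifferentiableAt ℝ h x
  · exact (hd.hasDerivAt.ofReal_comp).deriv
  · rw [deriv_zero_of_not_differentiableAt hd, deriv_zero_of_not_differentiableAt, Complex.ofReal_zero]
    intro contra
    apply hd
    have h1 : DifferentiableAt ℝ (fun t => Complex.re ((fun t => ((h t : ℝ) : ℂ)) t)) x :=
      (Complex.reCLM.differentiableAt.comp x contra)
    simpa using h1

lemma iteratedDeriv_ofReal_comp (n : ℕ) (h : ℝ → ℝ) :
    iteratedDeriv n (fun t => ((h t : ℝ) : ℂ)) = fun x => ((iteratedDeriv n h x : ℝ) : ℂ) := by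
  induction n with
  | zero => simp [iteratedDeriv_zero]
  | succ n ih =>
    funext x
    rw [iteratedDeriv_succ, ih, iteratedDeriv_succ]
    exact deriv_ofReal_comp _ x

lemma sqrt_two_pi_sq : Real.sqrt (2 * Real.pi) ^ 2 = 2 * Real.pi :=
  Real.sq_sqrt (by positivity)

noncomputable def f0 : ℝ → ℝ := fun y => Real.exp (-(y ^ 2 / 2))

lemma contDiff_f0 : ContDiff ℝ (⊤ : ℕ∞) f0 :=
  Real.contDiff_exp.comp (((contDiff_id.pow 2).div_const 2).neg)

lemma H_eq : (fun x : ℝ => Real.exp (-(Real.pi * x^2)))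
    = fun x => f0 (Real.sqrt (2 * Real.pi) * x) := by
  funext x
  unfold f0
  congr 1
  rw [mul_pow, sqrt_two_pi_sq]
  ring

lemma contDiff_f0' (n : ℕ) : ContDiff ℝ (n : ℕ∞) f0 := contDiff_f0.of_le (by exact_mod_cast le_top)

lemma iter_gauss (n : ℕ) (x : ℝ) :
    iteratedDeriv n (fun x : ℝ => Real.exp (-(Real.pi * x^2))) x
      = Real.sqrt (2 * Real.pi) ^ n * ((-1:ℝ)^n
          * (Polynomial.aeval (Real.sqrt (2 * Real.pi) * x) (Polynomial.hermite n))
          * Real.exp (-(Real.pi * x^2))) := by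
  rw [H_eq, iteratedDeriv_comp_const_mul (contDiff_f0' n) (Real.sqrt (2 * Real.pi))]
  have hb : (fun x => Real.sqrt (2 * Real.pi) ^ n
      * iteratedDeriv n f0 (Real.sqrt (2 * Real.pi) * x)) x
      = Real.sqrt (2 * Real.pi) ^ n
          * iteratedDeriv n f0 (Real.sqrt (2 * Real.pi) * x) := rfl
  rw [hb, iteratedDeriv_eq_iterate]
  have hf0 : deriv^[n] f0 (Real.sqrt (2 * Real.pi) * x)
      = (-1:ℝ)^n * (Polynomial.aeval (Real.sqrt (2 * Real.pi) * x) (Polynomial.hermite n))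
          * Real.exp (-((Real.sqrt (2 * Real.pi) * x)^2 / 2)) := by
    unfold f0
    exact Polynomial.deriv_gaussian_eq_hermite_mul_gaussian n _
  rw [hf0]
  rw [show (Real.sqrt (2 * Real.pi) * x)^2 = 2 * Real.pi * x^2 by rw [mul_pow, sqrt_two_pi_sq]]
  ring_nf

lemma cg_ofReal : cg = fun x : ℝ => ((Real.exp (-(Real.pi * x^2)) : ℝ) : ℂ) := by
  funext x
  unfold cg
  rw [show -(↑Real.pi * (x:ℂ)^2) = ((-(Real.pi * x^2) : ℝ) : ℂ) by push_cast; ring,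
    Complex.ofReal_exp]

lemma fourier_cg : 𝓕 cg = cg := by
  have h := fourier_gaussian_pi (b := 1) (by simp)
  have hfun : (fun x : ℝ => Complex.exp (-↑Real.pi * 1 * (x:ℂ)^2)) = cg := by
    funext x; unfold cg; congr 1; ring
  rw [hfun] at h
  rw [h]
  funext t
  unfold cg
  rw [Complex.one_cpow]
  rw [show -↑Real.pi/(1:ℂ)*(t:ℂ)^2 = -(↑Real.pi*(t:ℂ)^2) by ring]
  norm_num

lemma integrable_smul_cg (m : ℕ) : Integrable (fun x : ℝ => x^m • cg x) := by
  refine (integrable_main m 0).congr (Filter.Eventually.of_forall fun x => ?_)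
  simp only [cg, Complex.real_smul, Complex.ofReal_pow, Complex.ofReal_zero, mul_zero,
    zero_mul, neg_zero, Complex.exp_zero, mul_one]

lemma M_eq (n : ℕ) (k : ℝ) :
    ∫ z : ℝ, (z:ℂ)^n * Complex.exp (-(↑Real.pi * (z:ℂ)^2))
        * Complex.exp (-(2*↑Real.pi*Complex.I*(k:ℂ)*(z:ℂ)))
      = ((-2*↑Real.pi*Complex.I)^n)⁻¹ * ((Real.sqrt (2*Real.pi) : ℂ)^n * (-1:ℂ)^n
          * ((Polynomial.aeval (Real.sqrt (2*Real.pi) * k) (Polynomial.hermite n) : ℝ) : ℂ))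
          * Complex.exp (-(↑Real.pi * (k:ℂ)^2)) := by
  have hne : ((-2*↑Real.pi*Complex.I : ℂ))^n ≠ 0 := by
    apply pow_ne_zero
    simp [Real.pi_ne_zero, Complex.I_ne_zero]
  have hint : ∀ m : ℕ, (m : ℕ∞) ≤ (⊤ : ℕ∞) → Integrable (fun x : ℝ => x^m • cg x) :=
    fun m _ => integrable_smul_cg m
  have hID := Real.iteratedDeriv_fourier (f := cg) (N := (⊤ : ℕ∞)) (n := n) hint le_top
  rw [fourier_cg] at hID
  have h1 : iteratedDeriv n cg k = 𝓕 (fun x : ℝ => (-2*↑Real.pi*Complex.I*(x:ℝ))^n • cg x) k := by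
    rw [hID]
  rw [Real.fourier_real_eq_integral_exp_smul] at h1
  have h2 : ∀ v : ℝ, Complex.exp (((-2*Real.pi*v*k : ℝ) : ℂ) * Complex.I)
        • ((-2*↑Real.pi*Complex.I*(v:ℝ))^n • cg v)
      = (-2*↑Real.pi*Complex.I)^n * ((v:ℂ)^n * Complex.exp (-(↑Real.pi * (v:ℂ)^2))
          * Complex.exp (-(2*↑Real.pi*Complex.I*(k:ℂ)*(v:ℂ)))) := by
    intro v
    simp only [smul_eq_mul, cg]
    rw [show (((-2*Real.pi*v*k : ℝ) : ℂ) * Complex.I) = -(2*↑Real.pi*Complex.I*(k:ℂ)*(v:ℂ)) by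
      push_cast; ring]
    ring
  simp_rw [h2] at h1
  rw [MeasureTheory.integral_const_mul] at h1
  have h3 : iteratedDeriv n cg k
      = (((Real.sqrt (2*Real.pi))^n * ((-1:ℝ)^n
          * (Polynomial.aeval (Real.sqrt (2*Real.pi) * k) (Polynomial.hermite n))
          * Real.exp (-(Real.pi * k^2))) : ℝ) : ℂ) := by
    rw [cg_ofReal, iteratedDeriv_ofReal_comp]
    exact congrArg (fun r : ℝ => (r : ℂ)) (iter_gauss n k)
  rw [h3] at h1
  rw [(eq_inv_mul_iff_mul_eq₀ hne).mpr h1.symm]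
  push_cast
  ring

lemma sum_split (j : ℕ) (f : ℕ → ℝ) :
    ∑ m ∈ Finset.range (2*j+1), f m
      = ∑ t ∈ Finset.range (j+1), f (2*t) + ∑ t ∈ Finset.range j, f (2*t+1) := by
  induction j with
  | zero => simp
  | succ j ih =>
    rw [show 2*(j+1)+1 = (2*j+1)+1+1 by ring, Finset.sum_range_succ, Finset.sum_range_succ, ih,
      Finset.sum_range_succ (fun t => f (2*t)) (j+1), Finset.sum_range_succ (fun t => f (2*t+1)) j,
      show 2*j+1+1 = 2*(j+1) by ring]
    ring

lemma herm_even (j : ℕ) (x : ℝ) :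
    (Polynomial.aeval x (Polynomial.hermite (2*j)) : ℝ)
      = ∑ t ∈ Finset.range (j+1),
          (-1:ℝ)^(j-t) * ((2*(j-t)-1)‼ : ℕ) * ((2*j).choose (2*t) : ℕ) * x^(2*t) := by
  rw [Polynomial.aeval_eq_sum_range (p := Polynomial.hermite (2*j)) x,
    Polynomial.natDegree_hermite, sum_split]
  have hodd : ∑ t ∈ Finset.range j, (Polynomial.hermite (2*j)).coeff (2*t+1) • x^(2*t+1) = 0 := by
    apply Finset.sum_eq_zero
    intro t ht
    rw [Polynomial.coeff_hermite_of_odd_add (by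
      refine ⟨j + t, by ring⟩), zero_smul]
  rw [hodd, add_zero]
  apply Finset.sum_congr rfl
  intro t ht
  have htj : t ≤ j := by simpa [Nat.lt_succ_iff] using Finset.mem_range.mp ht
  have hco := Polynomial.coeff_hermite_explicit (j - t) (2*t)
  rw [show 2*(j-t) + 2*t = 2*j by omega] at hco
  rw [hco, zsmul_eq_mul]
  push_cast
  ring

lemma herm_term (j : ℕ) (k : ℝ) :
    ((Polynomial.aeval (Real.sqrt (2*Real.pi) * k) (Polynomial.hermite (2*j)) : ℝ) : ℂ)
      = ∑ t ∈ Finset.range (j+1),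
          (-1:ℂ)^(j-t) * ((2*(j-t)-1)‼ : ℕ) * ((2*j).choose (2*t) : ℕ)
            * ((2*Real.pi : ℝ) : ℂ)^t * (k:ℂ)^(2*t) := by
  rw [herm_even]
  push_cast
  apply Finset.sum_congr rfl
  intro t ht
  have hs : ((Real.sqrt (2*Real.pi) : ℝ) : ℂ)^(2*t) = (2*(Real.pi:ℂ))^t := by
    rw [pow_mul, ← Complex.ofReal_pow, sqrt_two_pi_sq]
    push_cast
    ring
  rw [mul_pow, hs]
  ring

lemma M2_eq (j : ℕ) (k : ℝ) :
    ∫ z : ℝ, (z:ℂ)^(2*j) * Complex.exp (-(↑Real.pi * (z:ℂ)^2))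
        * Complex.exp (-(2*↑Real.pi*Complex.I*(k:ℂ)*(z:ℂ)))
      = (-1:ℂ)^j * ((((2*Real.pi:ℝ)):ℂ)^j)⁻¹
          * ((Polynomial.aeval (Real.sqrt (2*Real.pi) * k) (Polynomial.hermite (2*j)) : ℝ) : ℂ)
          * Complex.exp (-(↑Real.pi * (k:ℂ)^2)) := by
  rw [M_eq]
  have hAne : (((2*Real.pi:ℝ)):ℂ) ≠ 0 := by
    exact_mod_cast (by positivity : (2*Real.pi:ℝ) ≠ 0)
  have hAj : (((2*Real.pi:ℝ)):ℂ)^j ≠ 0 := pow_ne_zero _ hAne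
  have ha : ((Real.sqrt (2*Real.pi) : ℝ):ℂ)^(2*j) = (((2*Real.pi:ℝ)):ℂ)^j := by
    rw [pow_mul, ← Complex.ofReal_pow, sqrt_two_pi_sq]
  have hsq2 : (-1:ℂ)^(2*j) = 1 := by rw [pow_mul]; norm_num
  have hb : ((-2*(Real.pi:ℂ)*Complex.I)^(2*j))
      = (-1:ℂ)^j * ((((2*Real.pi:ℝ)):ℂ)^j * (((2*Real.pi:ℝ)):ℂ)^j) := by
    rw [pow_mul, show (-2*(Real.pi:ℂ)*Complex.I)^2 = -(((((2*Real.pi:ℝ)):ℂ))^2) by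
      push_cast; ring_nf; rw [Complex.I_sq]; ring]
    rw [neg_pow, ← pow_mul, show 2*j = j + j from two_mul j, pow_add]
  rw [ha, hsq2, hb]
  have hsq : (-1:ℂ)^j * (-1:ℂ)^j = 1 := by rw [← mul_pow]; norm_num
  have hXne : ((-1:ℂ)^j * ((((2*Real.pi:ℝ)):ℂ)^j * (((2*Real.pi:ℝ)):ℂ)^j)) ≠ 0 :=
    mul_ne_zero (pow_ne_zero _ (by norm_num)) (mul_ne_zero hAj hAj)
  apply mul_left_cancel₀ hXne
  rw [← mul_assoc, ← mul_assoc, mul_inv_cancel₀ hXne, one_mul]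
  have key : ((-1:ℂ)^j * ((((2*Real.pi:ℝ)):ℂ)^j * (((2*Real.pi:ℝ)):ℂ)^j))
        * ((-1:ℂ)^j * ((((2*Real.pi:ℝ)):ℂ)^j)⁻¹
            * ((Polynomial.aeval (Real.sqrt (2*Real.pi) * k) (Polynomial.hermite (2*j)) : ℝ) : ℂ)
            * Complex.exp (-(↑Real.pi * (k:ℂ)^2)))
      = ((-1:ℂ)^j * (-1:ℂ)^j) * ((((2*Real.pi:ℝ)):ℂ)^j * ((((2*Real.pi:ℝ)):ℂ)^j)⁻¹)
        * ((((2*Real.pi:ℝ)):ℂ)^j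
            * ((Polynomial.aeval (Real.sqrt (2*Real.pi) * k) (Polynomial.hermite (2*j)) : ℝ) : ℂ)
            * Complex.exp (-(↑Real.pi * (k:ℂ)^2))) := by ring
  rw [key, hsq, mul_inv_cancel₀ hAj, one_mul, one_mul, mul_one]

noncomputable def Gfun (i : ℕ) (α : ℂ) (k : ℝ) (j t : ℕ) : ℂ :=
  ((-1:ℂ)^j * gbinom ((i:ℂ)+α) (i-j) * (Real.pi:ℂ)^j / (j.factorial : ℂ))
    * ((-1:ℂ)^j * (((2*(Real.pi:ℂ)))^j)⁻¹
        * ((-1:ℂ)^(j-t) * ((2*(j-t)-1)‼ : ℕ) * ((2*j).choose (2*t) : ℕ)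
            * (2*(Real.pi:ℂ))^t * (k:ℂ)^(2*t)))

lemma swap_tri (N : ℕ) (F : ℕ → ℕ → ℂ) :
    ∑ j ∈ Finset.range (N+1), ∑ t ∈ Finset.range (j+1), F j t
      = ∑ t ∈ Finset.range (N+1), ∑ j ∈ Finset.Ico t (N+1), F j t := by
  simp only [Finset.range_eq_Ico]
  exact (Finset.sum_Ico_Ico_comm 0 (N+1) (fun t j => F j t)).symm

lemma pow_cancel_aux (t s : ℕ) :
    ((2*(Real.pi:ℂ))^(t+s))⁻¹ * (2*(Real.pi:ℂ))^t * (Real.pi:ℂ)^(t+s)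
      = (Real.pi:ℂ)^t * ((2:ℂ)^s)⁻¹ := by
  have hπ : (Real.pi:ℂ) ≠ 0 := by exact_mod_cast Real.pi_ne_zero
  have h2π : (2*(Real.pi:ℂ)) ≠ 0 := mul_ne_zero two_ne_zero hπ
  have hts : (2*(Real.pi:ℂ))^(t+s) ≠ 0 := pow_ne_zero _ h2π
  have h2s : ((2:ℂ))^s ≠ 0 := pow_ne_zero _ two_ne_zero
  field_simp
  rw [pow_add, pow_add, mul_pow, mul_pow]
  ring

lemma final_sum (i : ℕ) (α : ℂ) (k : ℝ) :
    ∑ j ∈ Finset.range (i+1),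
      ((-1:ℂ)^j * gbinom ((i:ℂ)+α) (i-j) * (Real.pi:ℂ)^j / (j.factorial : ℂ))
        * ((-1:ℂ)^j * ((((2*Real.pi:ℝ)):ℂ)^j)⁻¹
            * ∑ t ∈ Finset.range (j+1), (-1:ℂ)^(j-t) * ((2*(j-t)-1)‼ : ℕ) * ((2*j).choose (2*t) : ℕ)
                * (((2*Real.pi:ℝ)):ℂ)^t * (k:ℂ)^(2*t))
      = (-1:ℂ)^i * ∑ t ∈ Finset.range (i+1),
          (-1:ℂ)^t * gbinom ((i:ℂ) + (-(i:ℂ) - α - 1/2)) (i-t)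
            * ((Real.pi:ℂ) * (k:ℂ)^2)^t / (t.factorial : ℂ) := by
  have harg : ∀ t : ℕ, gbinom ((i:ℂ) + (-(i:ℂ) - α - 1/2)) (i-t) = gbinom (-α - 1/2) (i-t) := by
    intro t
    congr 1
    ring
  have h2π : (((2*Real.pi:ℝ)):ℂ) = 2*(Real.pi:ℂ) := by push_cast; ring
  simp only [harg, h2π]
  calc ∑ j ∈ Finset.range (i+1),
      ((-1:ℂ)^j * gbinom ((i:ℂ)+α) (i-j) * (Real.pi:ℂ)^j / (j.factorial : ℂ))
        * ((-1:ℂ)^j * ((2*(Real.pi:ℂ))^j)⁻¹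
            * ∑ t ∈ Finset.range (j+1), (-1:ℂ)^(j-t) * ((2*(j-t)-1)‼ : ℕ) * ((2*j).choose (2*t) : ℕ)
                * (2*(Real.pi:ℂ))^t * (k:ℂ)^(2*t))
      = ∑ j ∈ Finset.range (i+1), ∑ t ∈ Finset.range (j+1), Gfun i α k j t := by
        apply Finset.sum_congr rfl
        intro j _
        rw [Finset.mul_sum, Finset.mul_sum]
        apply Finset.sum_congr rfl
        intro t _
        simp only [Gfun]
    _ = ∑ t ∈ Finset.range (i+1), ∑ j ∈ Finset.Ico t (i+1), Gfun i α k j t := swap_tri i _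
    _ = (-1:ℂ)^i * ∑ t ∈ Finset.range (i+1),
          (-1:ℂ)^t * gbinom (-α - 1/2) (i-t)
            * ((Real.pi:ℂ) * (k:ℂ)^2)^t / (t.factorial : ℂ) := by
        rw [Finset.mul_sum]
        apply Finset.sum_congr rfl
        intro t ht
        have htle : t ≤ i := by simpa [Nat.lt_succ_iff] using Finset.mem_range.mp ht
        rw [Finset.sum_Ico_eq_sum_range, show i + 1 - t = (i - t) + 1 by omega]
        have hterm : ∀ s ∈ Finset.range ((i-t)+1),
            Gfun i α k (t+s) t = gbinom ((i:ℂ) + α) (i - t - s)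
                * ((-1:ℂ)^s * (((2*s-1)‼ : ℂ) * ((2*(t+s)).choose (2*t)) / (2^s * (t+s).factorial)))
                * ((Real.pi:ℂ)^t * (k:ℂ)^(2*t)) := by
          intro s _
          simp only [Gfun]
          rw [show t + s - t = s by omega, show i - (t+s) = i - t - s by omega]
          have hsq : (-1:ℂ)^(t+s) * (-1:ℂ)^(t+s) = 1 := by rw [← mul_pow]; norm_num
          calc ((-1:ℂ)^(t+s) * gbinom ((i:ℂ)+α) (i-t-s) * (Real.pi:ℂ)^(t+s) / ((t+s).factorial : ℂ))
                * ((-1:ℂ)^(t+s) * ((2*(Real.pi:ℂ))^(t+s))⁻¹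
                    * ((-1:ℂ)^s * ((2*s-1)‼ : ℕ) * ((2*(t+s)).choose (2*t) : ℕ)
                        * (2*(Real.pi:ℂ))^t * (k:ℂ)^(2*t)))
              = ((-1:ℂ)^(t+s) * (-1:ℂ)^(t+s))
                  * (gbinom ((i:ℂ)+α) (i-t-s)
                    * ((-1:ℂ)^s * ((2*s-1)‼ : ℕ) * ((2*(t+s)).choose (2*t) : ℕ) * (k:ℂ)^(2*t))
                    * (((2*(Real.pi:ℂ))^(t+s))⁻¹ * (2*(Real.pi:ℂ))^t * (Real.pi:ℂ)^(t+s))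
                    / ((t+s).factorial : ℂ)) := by ring
            _ = gbinom ((i:ℂ)+α) (i-t-s)
                    * ((-1:ℂ)^s * ((2*s-1)‼ : ℕ) * ((2*(t+s)).choose (2*t) : ℕ) * (k:ℂ)^(2*t))
                    * ((Real.pi:ℂ)^t * ((2:ℂ)^s)⁻¹)
                    / ((t+s).factorial : ℂ) := by rw [hsq, one_mul, pow_cancel_aux]
            _ = gbinom ((i:ℂ) + α) (i - t - s)
                * ((-1:ℂ)^s * (((2*s-1)‼ : ℂ) * ((2*(t+s)).choose (2*t)) / (2^s * (t+s).factorial)))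
                * ((Real.pi:ℂ)^t * (k:ℂ)^(2*t)) := by ring
        rw [Finset.sum_congr rfl hterm, ← Finset.sum_mul, key_sum i t α htle]
        have h2 : (-1:ℂ)^t*(-1:ℂ)^t = 1 := by rw [← mul_pow]; norm_num
        have hsign : (-1:ℂ)^(i-t) = (-1:ℂ)^i * (-1:ℂ)^t := by
          calc (-1:ℂ)^(i-t) = (-1:ℂ)^(i-t) * ((-1:ℂ)^t * (-1:ℂ)^t) := by rw [h2, mul_one]
            _ = (-1:ℂ)^((i-t)+t) * (-1:ℂ)^t := by rw [pow_add]; ring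
            _ = (-1:ℂ)^i * (-1:ℂ)^t := by rw [Nat.sub_add_cancel htle]
        rw [hsign, mul_pow (Real.pi:ℂ) ((k:ℂ)^2) t, ← pow_mul]
        ring

theorem fourier_gaussian_laguerre (i : ℕ) (α : ℂ) (k : ℝ) :
    ∫ z : ℝ, Real.exp (-(Real.pi * z ^ 2)) * lag i α (Real.pi * z ^ 2) *
        Complex.exp (-(2 * Real.pi * Complex.I * k * z)) =
      (-1 : ℂ) ^ i * Real.exp (-(Real.pi * k ^ 2)) *
        lag i (-(i : ℂ) - α - 1 / 2) (Real.pi * k ^ 2) := by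
  have hpt : ∀ z : ℝ, (Real.exp (-(Real.pi * z ^ 2)) : ℂ) * lag i α (Real.pi * z ^ 2) *
        Complex.exp (-(2 * Real.pi * Complex.I * k * z))
      = ∑ j ∈ Finset.range (i+1),
          ((-1:ℂ)^j * gbinom ((i:ℂ)+α) (i-j) * (Real.pi:ℂ)^j / (j.factorial : ℂ))
            * ((z:ℂ)^(2*j) * Complex.exp (-(↑Real.pi * (z:ℂ)^2))
                * Complex.exp (-(2*↑Real.pi*Complex.I*(k:ℂ)*(z:ℂ)))) := by
    intro z
    simp only [lag]
    rw [Finset.mul_sum, Finset.sum_mul]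
    apply Finset.sum_congr rfl
    intro j _
    rw [show ((Real.exp (-(Real.pi * z ^ 2)) : ℝ) : ℂ) = Complex.exp (-(↑Real.pi * (z:ℂ)^2)) by
      rw [show -(↑Real.pi * (z:ℂ)^2) = ((-(Real.pi * z^2) : ℝ) : ℂ) by push_cast; ring,
        Complex.ofReal_exp]]
    push_cast
    ring
  rw [MeasureTheory.integral_congr_ae (Filter.Eventually.of_forall hpt)]
  rw [MeasureTheory.integral_finset_sum _ (fun j _ => ((integrable_main (2*j) k).const_mul _))]
  simp_rw [MeasureTheory.integral_const_mul, M2_eq, herm_term]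
  have hfact : ∑ j ∈ Finset.range (i+1),
      ((-1:ℂ)^j * gbinom ((i:ℂ)+α) (i-j) * (Real.pi:ℂ)^j / (j.factorial : ℂ))
        * ((-1:ℂ)^j * ((((2*Real.pi:ℝ)):ℂ)^j)⁻¹
            * (∑ t ∈ Finset.range (j+1), (-1:ℂ)^(j-t) * ((2*(j-t)-1)‼ : ℕ) * ((2*j).choose (2*t) : ℕ)
                * (((2*Real.pi:ℝ)):ℂ)^t * (k:ℂ)^(2*t))
            * Complex.exp (-(↑Real.pi * (k:ℂ)^2)))
      = (∑ j ∈ Finset.range (i+1),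
          ((-1:ℂ)^j * gbinom ((i:ℂ)+α) (i-j) * (Real.pi:ℂ)^j / (j.factorial : ℂ))
            * ((-1:ℂ)^j * ((((2*Real.pi:ℝ)):ℂ)^j)⁻¹
                * ∑ t ∈ Finset.range (j+1), (-1:ℂ)^(j-t) * ((2*(j-t)-1)‼ : ℕ) * ((2*j).choose (2*t) : ℕ)
                    * (((2*Real.pi:ℝ)):ℂ)^t * (k:ℂ)^(2*t)))
          * Complex.exp (-(↑Real.pi * (k:ℂ)^2)) := by
    rw [Finset.sum_mul]
    apply Finset.sum_congr rfl
    intro j _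
    ring
  rw [hfact, final_sum]
  rw [show ((Real.exp (-(Real.pi * k ^ 2)) : ℝ) : ℂ) = Complex.exp (-(↑Real.pi * (k:ℂ)^2)) by
    rw [show -(↑Real.pi * (k:ℂ)^2) = ((-(Real.pi * k^2) : ℝ) : ℂ) by push_cast; ring,
      Complex.ofReal_exp]]
  simp only [lag]
  ring
end
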